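/- arXiv:1109.2226 — 5 statements merged into one kernel-verified Lean document; each statement's English description precedes it below -/
import Mathlib

section
/- For any finite nonempty subset X of the unit sphere S^{d-1} in R^d and any nonnegative even integer l, the average (1/|X|^2) * sum over x,y in X of (x·y)^l is at least ((l-1)!! (d-2)!!)/((d+l-2)!!); for odd l the average is at least 0. -/
open MeasureTheory MvPolynomial
open scoped BigOperators RealInnerProductSpace Classical

noncomputable section

abbrev Euc (d : ℕ) := EuclideanSpace ℝ (Fin d)

/-- Double factorial, with `dfac n = 1` for `n ≤ 1`. -/
def dfac : ℕ → ℕ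
  | 0 => 1
  | 1 => 1
  | (n+2) => (n+2) * dfac n

/-- Dimension of the space of harmonic homogeneous polynomials of degree `i`
in `d` variables. -/
def harmDim (d i : ℕ) : ℕ :=
  if i = 0 then 1 else if i = 1 then d
  else Nat.choose (d + i - 1) i - Nat.choose (d + i - 3) (i - 2)

/-- `Q` is the family of Gegenbauer polynomials for `S^{d-1}`: `Q i` has degree `i`,
they are orthogonal on `[-1,1]` with respect to the weight `(1-t^2)^((d-3)/2)`,
and they are normalized by `Q i (1) = dim Harm_i(ℝ^d)`. -/
def IsGegenbauer (d : ℕ) (Q : ℕ → Polynomial ℝ) : Prop :=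
  (∀ i, (Q i).natDegree = i) ∧
  (∀ i j, i ≠ j →
    ∫ t in Set.Ioo (-1 : ℝ) 1,
      (Q i).eval t * (Q j).eval t * Real.rpow (1 - t ^ 2) (((d : ℝ) - 3) / 2) = 0) ∧
  (∀ i, (Q i).eval 1 = (harmDim d i : ℝ))

/-- Average of a function over the sphere of radius `r` about the origin,
with respect to the (rotation invariant) Hausdorff measure. -/
def sphAvg (d : ℕ) (r : ℝ) (f : Euc d → ℝ) : ℝ :=
  (∫ x in Metric.sphere (0 : Euc d) r, f x ∂(μH[(d : ℝ) - 1])) /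
    ((μH[(d : ℝ) - 1]) (Metric.sphere (0 : Euc d) r)).toReal

/-- A spherical `t`-design on the unit sphere. -/
def IsSphericalDesign (d t : ℕ) (X : Finset (Euc d)) : Prop :=
  ∀ f : MvPolynomial (Fin d) ℝ, f.totalDegree ≤ t →
    sphAvg d 1 (fun x => eval (fun i => x i) f) =
      (∑ x ∈ X, eval (fun i => x i) f) / (X.card : ℝ)

/-- A polynomial is harmonic if its Laplacian vanishes. -/
def IsHarmonicPoly {d : ℕ} (f : MvPolynomial (Fin d) ℝ) : Prop :=
  ∑ i : Fin d, pderiv i (pderiv i f) = 0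

/-- Euclidean `t`-design. -/
def IsEuclideanDesign (d t : ℕ) (X : Finset (Euc d)) (w : Euc d → ℝ) : Prop :=
  ∀ f : MvPolynomial (Fin d) ℝ, f.totalDegree ≤ t →
    (∑ r ∈ X.image (fun x => ‖x‖),
      (∑ x ∈ X.filter (fun x => ‖x‖ = r), w x) *
        sphAvg d r (fun x => eval (fun i => x i) f))
      = ∑ x ∈ X, w x * eval (fun i => x i) f

/-- `x' = x / ‖x‖`. -/
def unitize {d : ℕ} (x : Euc d) : Euc d := ‖x‖⁻¹ • x

/-- Strong Euclidean `t`-design, with respect to the Gegenbauer family `Q`. -/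
def IsStrongEuclideanDesign (d t : ℕ) (Q : ℕ → Polynomial ℝ)
    (X : Finset (Euc d)) (w : Euc d → ℝ) : Prop :=
  ∀ i ≤ t, ∀ j, 1 ≤ j → j ≤ t →
    (∑ x ∈ X, ∑ y ∈ X, w x * w y * (‖x‖ * ‖y‖) ^ i *
      (Q j).eval ⟪unitize x, unitize y⟫) = 0

/-- Restriction of a function on `ℝ^d` to a subset `T`. -/
def restrictFun {d : ℕ} (T : Set (Euc d)) (f : Euc d → ℝ) : T → ℝ := fun x => f x

/-- `Hom_j(T)`: restrictions to `T` of homogeneous degree `j` polynomials. -/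
def HomOn (d j : ℕ) (T : Set (Euc d)) : Submodule ℝ (T → ℝ) :=
  Submodule.span ℝ
    { f | ∃ p : MvPolynomial (Fin d) ℝ, p.IsHomogeneous j ∧
        f = restrictFun T (fun x => eval (fun i => x i) p) }

/-- `(‖x‖ Hom_k)(T)`: restrictions to `T` of `‖x‖ p(x)` with `p` homogeneous of degree `k`. -/
def NormHomOn (d k : ℕ) (T : Set (Euc d)) : Submodule ℝ (T → ℝ) :=
  Submodule.span ℝ
    { f | ∃ p : MvPolynomial (Fin d) ℝ, p.IsHomogeneous k ∧
        f = restrictFun T (fun x => ‖x‖ * eval (fun i => x i) p) }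

/-- `Hom'_j(T) = Hom_j(T) + (‖x‖ Hom_{j-1})(T)` (for `j ≥ 1`). -/
def HomOn' (d j : ℕ) (T : Set (Euc d)) : Submodule ℝ (T → ℝ) :=
  HomOn d j T ⊔ NormHomOn d (j - 1) T

/-- `F` belongs to `Pol'_j(ℝ^d) = Pol_j(ℝ^d) + ‖x‖ Pol_{j-1}(ℝ^d)` (as a space of
functions on `ℝ^d`), for `j : ℤ` with the convention that negative-degree spaces are `0`. -/
def InPol' (d : ℕ) (j : ℤ) (F : Euc d → ℝ) : Prop :=
  ∃ f g : MvPolynomial (Fin d) ℝ,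
    (f = 0 ∨ (f.totalDegree : ℤ) ≤ j) ∧ (g = 0 ∨ (g.totalDegree : ℤ) ≤ j - 1) ∧
    F = fun x => eval (fun i => x i) f + ‖x‖ * eval (fun i => x i) g

/-- `Pol'_j(T)`: restrictions to `T` of elements of `Pol'_j(ℝ^d)`. -/
def PolOn' (d j : ℕ) (T : Set (Euc d)) : Submodule ℝ (T → ℝ) :=
  Submodule.span ℝ { f | ∃ F : Euc d → ℝ, InPol' d (j : ℤ) F ∧ f = restrictFun T F }


namespace SidAux

def dm : ℕ → ℝ
  | 0 => 1
  | 1 => 0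
  | (n+2) => (n+1) * dm n

lemma dm_add_two (n : ℕ) : dm (n+2) = (n+1) * dm n := rfl

lemma dm_succ (n : ℕ) : dm (n+1) = n * dm (n-1) := by
  match n with
  | 0 => simp [dm]
  | (k+1) => rw [show k+1+1 = k+2 from rfl, dm_add_two]; push_cast; ring_nf

def w (d : ℕ) (α : Fin d →₀ ℕ) : ℝ := ∏ i, dm (α i)

def Efun (d : ℕ) : MvPolynomial (Fin d) ℝ →ₗ[ℝ] ℝ :=
  (MvPolynomial.basisMonomials (Fin d) ℝ).constr ℝ (w d)

lemma Efun_monomial (d : ℕ) (α : Fin d →₀ ℕ) (c : ℝ) :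
    Efun d (monomial α c) = c * w d α := by
  have h1 : (monomial α c : MvPolynomial (Fin d) ℝ) = c • monomial α 1 := by
    rw [smul_monomial, smul_eq_mul, mul_one]
  have h2 : Efun d (monomial α 1) = w d α := by
    have := Module.Basis.constr_basis (MvPolynomial.basisMonomials (Fin d) ℝ) ℝ (w d) α
    rw [coe_basisMonomials] at this
    exact this
  rw [h1, LinearMap.map_smul, smul_eq_mul, h2]

lemma Efun_C_mul (d : ℕ) (c : ℝ) (p : MvPolynomial (Fin d) ℝ) :
    Efun d (C c * p) = c * Efun d p := by
  rw [C_mul', LinearMap.map_smul, smul_eq_mul]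

lemma Efun_one (d : ℕ) : Efun d 1 = 1 := by
  have : (1 : MvPolynomial (Fin d) ℝ) = monomial 0 1 := by simp
  rw [this, Efun_monomial, w]
  simp [dm]

lemma Efun_X_mul (d : ℕ) (i : Fin d) (p : MvPolynomial (Fin d) ℝ) :
    Efun d (MvPolynomial.X i * p) = Efun d (pderiv i p) := by
  induction p using MvPolynomial.induction_on' with
  | add p q hp hq => rw [mul_add, map_add, map_add, map_add, hp, hq]
  | monomial α c =>
    have hX : (MvPolynomial.X i : MvPolynomial (Fin d) ℝ) * monomial α c
        = monomial (α + Finsupp.single i 1) c := by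
      rw [show (MvPolynomial.X i : MvPolynomial (Fin d) ℝ)
          = monomial (Finsupp.single i 1) 1 from rfl, monomial_mul, one_mul, add_comm]
    rw [hX, pderiv_monomial, Efun_monomial, Efun_monomial]
    have key : ∀ β : Fin d →₀ ℕ,
        w d β = dm (β i) * ∏ j ∈ Finset.univ.erase i, dm (β j) := by
      intro β
      rw [w, ← Finset.mul_prod_erase Finset.univ (fun j => dm (β j)) (Finset.mem_univ i)]
    rw [key, key]
    have h1 : ∀ j ∈ Finset.univ.erase i,
        dm ((α + Finsupp.single i 1 : Fin d →₀ ℕ) j) = dm (α j) := by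
      intro j hj
      rw [Finsupp.add_apply, Finsupp.single_eq_of_ne (Finset.ne_of_mem_erase hj), add_zero]
    have h2 : ∀ j ∈ Finset.univ.erase i,
        dm ((α - Finsupp.single i 1 : Fin d →₀ ℕ) j) = dm (α j) := by
      intro j hj
      rw [Finsupp.tsub_apply, Finsupp.single_eq_of_ne (Finset.ne_of_mem_erase hj),
        Nat.sub_zero]
    rw [Finset.prod_congr rfl h1, Finset.prod_congr rfl h2]
    have e1 : (α + Finsupp.single i 1 : Fin d →₀ ℕ) i = α i + 1 := by simp
    have e2 : (α - Finsupp.single i 1 : Fin d →₀ ℕ) i = α i - 1 := by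
      rw [Finsupp.tsub_apply, Finsupp.single_eq_same]
    rw [e1, e2, dm_succ]
    ring

/-- key1 -/
lemma Efun_linear_pow (d : ℕ) (x : Fin d → ℝ) (l : ℕ) :
    Efun d ((∑ i, C (x i) * MvPolynomial.X i) ^ l)
      = dm l * (∑ i, x i ^ 2) ^ (l / 2) := by
  induction l using Nat.strong_induction_on with
  | _ l ih =>
    match l with
    | 0 => simp [Efun_one, dm]
    | 1 =>
      rw [pow_one, map_sum]
      have h0 : ∀ i : Fin d, Efun d (C (x i) * MvPolynomial.X i) = 0 := by
        intro i
        rw [Efun_C_mul]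
        have hXi : (MvPolynomial.X i : MvPolynomial (Fin d) ℝ)
            = monomial (Finsupp.single i 1) 1 := rfl
        rw [hXi, Efun_monomial, w, ← Finset.mul_prod_erase Finset.univ _ (Finset.mem_univ i),
          Finsupp.single_eq_same]
        have hdm : dm 1 = 0 := rfl
        rw [hdm]
        ring
      rw [Finset.sum_congr rfl fun i _ => h0 i, Finset.sum_const, smul_zero]
      have hdm : dm 1 = 0 := rfl
      rw [hdm, zero_mul]
    | (n+2) =>
      set q : MvPolynomial (Fin d) ℝ := ∑ i, C (x i) * MvPolynomial.X i with hq
      have hpd : ∀ i : Fin d, pderiv i q = C (x i) := by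
        intro i
        rw [hq, map_sum, Finset.sum_eq_single i]
        · rw [pderiv_C_mul, pderiv_X_self, mul_one]
        · intro j _ hj
          rw [pderiv_C_mul, pderiv_X_of_ne hj, mul_zero]
        · intro h; exact absurd (Finset.mem_univ i) h
      have step : Efun d (q ^ (n+2)) = (n+1) * (∑ i, x i ^ 2) * Efun d (q ^ n) := by
        have e1 : q ^ (n+2) = ∑ i, C (x i) * (MvPolynomial.X i * q ^ (n+1)) := by
          calc q ^ (n+2) = q * q ^ (n+1) := by ring
          _ = ∑ i, C (x i) * (MvPolynomial.X i * q ^ (n+1)) := by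
              rw [hq, Finset.sum_mul]
              exact Finset.sum_congr rfl fun i _ => by rw [← hq]; ring
        rw [e1, map_sum]
        have e2 : ∀ i : Fin d, Efun d (C (x i) * (MvPolynomial.X i * q ^ (n+1)))
            = x i ^ 2 * ((n+1) * Efun d (q ^ n)) := by
          intro i
          rw [Efun_C_mul, Efun_X_mul, pderiv_pow, hpd]
          have e3 : ((n+1 : ℕ) : MvPolynomial (Fin d) ℝ) * q ^ (n + 1 - 1) * C (x i)
              = C ((n+1 : ℕ) * x i) * q ^ n := by
            rw [Nat.add_sub_cancel, map_mul, ← map_natCast (C : ℝ →+* MvPolynomial (Fin d) ℝ)]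
            ring
          rw [e3, Efun_C_mul]
          push_cast
          ring
        rw [Finset.sum_congr rfl fun i _ => e2 i, ← Finset.sum_mul]
        ring
      rw [step, ih n (by omega)]
      have hdiv : (n+2)/2 = n/2 + 1 := by omega
      rw [hdiv, dm_add_two]
      ring

def Sp (d : ℕ) : MvPolynomial (Fin d) ℝ := ∑ i, MvPolynomial.X i ^ 2

/-- key2 -/
lemma Efun_Sp_pow (d : ℕ) (m : ℕ) :
    Efun d (Sp d ^ m) = ∏ k ∈ Finset.range m, ((d : ℝ) + 2 * k) := by
  induction m with
  | zero => simpa using Efun_one d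
  | succ m ih =>
    have hpdSp : ∀ i : Fin d, pderiv i (Sp d) = 2 * MvPolynomial.X i := by
      intro i
      rw [Sp, map_sum, Finset.sum_eq_single i]
      · rw [pderiv_pow, pderiv_X_self, mul_one, pow_one]
        push_cast; ring
      · intro j _ hj
        rw [pderiv_pow, pderiv_X_of_ne hj, mul_zero]
      · intro h; exact absurd (Finset.mem_univ i) h
    have e3 : (∑ i, MvPolynomial.X i * pderiv i (Sp d ^ m))
        = (2 * m : ℕ) • Sp d ^ m := by
      cases m with
      | zero => simp
      | succ k =>
        have : ∀ i : Fin d, MvPolynomial.X i * pderiv i (Sp d ^ (k+1))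
            = (((k+1 : ℕ) : MvPolynomial (Fin d) ℝ) * 2 * Sp d ^ k) * MvPolynomial.X i ^ 2 := by
          intro i
          rw [pderiv_pow, hpdSp, Nat.add_sub_cancel]
          ring
        rw [Finset.sum_congr rfl fun i _ => this i, ← Finset.mul_sum, ← Sp, nsmul_eq_mul]
        push_cast
        ring
    have e1 : Sp d ^ (m+1) = ∑ i, MvPolynomial.X i * (MvPolynomial.X i * Sp d ^ m) := by
      calc Sp d ^ (m+1) = Sp d * Sp d ^ m := by ring
      _ = _ := by
          rw [Sp, Finset.sum_mul]
          exact Finset.sum_congr rfl fun i _ => by rw [← Sp]; ring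
    have e2 : ∀ i : Fin d, Efun d (MvPolynomial.X i * (MvPolynomial.X i * Sp d ^ m))
        = Efun d (Sp d ^ m) + Efun d (MvPolynomial.X i * pderiv i (Sp d ^ m)) := by
      intro i
      rw [Efun_X_mul, pderiv_mul, pderiv_X_self, one_mul, map_add]
    rw [e1, map_sum, Finset.sum_congr rfl fun i _ => e2 i, Finset.sum_add_distrib,
      Finset.sum_const, ← map_sum, e3, map_nsmul]
    rw [Finset.prod_range_succ, ih]
    simp only [Finset.card_univ, Fintype.card_fin, nsmul_eq_mul]
    push_cast
    ring


lemma expand_pow (d l : ℕ) (x : Fin d → ℝ) :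
    ((∑ i, C (x i) * MvPolynomial.X i : MvPolynomial (Fin d) ℝ) ^ l)
      = ∑ f : Fin l → Fin d, C (∏ k, x (f k)) * ∏ k, MvPolynomial.X (f k) := by
  rw [Fintype.sum_pow]
  refine Finset.sum_congr rfl fun f _ => ?_
  rw [Finset.prod_mul_distrib, map_prod]

lemma sum_prod_mul_E (d l : ℕ) (x : Fin d → ℝ) :
    ∑ f : Fin l → Fin d, (∏ k, x (f k)) * Efun d (∏ k, MvPolynomial.X (f k))
      = dm l * (∑ i, x i ^ 2) ^ (l / 2) := by
  rw [← Efun_linear_pow, expand_pow, map_sum]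
  exact Finset.sum_congr rfl fun f _ => (Efun_C_mul _ _ _).symm

lemma sum_M_sq (d l : ℕ) :
    ∑ f : Fin l → Fin d, Efun d (∏ k, MvPolynomial.X (f k)) ^ 2
      = dm l * ∏ k ∈ Finset.range (l / 2), ((d : ℝ) + 2 * k) := by
  have hP : (∑ f : Fin l → Fin d,
        C (Efun d (∏ k, MvPolynomial.X (f k))) * ∏ k, (MvPolynomial.X (f k) : MvPolynomial (Fin d) ℝ))
      = C (dm l) * Sp d ^ (l / 2) := by
    apply MvPolynomial.funext
    intro x
    rw [map_sum]
    have h1 : ∀ f : Fin l → Fin d,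
        eval x (C (Efun d (∏ k, MvPolynomial.X (f k))) * ∏ k, MvPolynomial.X (f k))
        = (∏ k, x (f k)) * Efun d (∏ k, MvPolynomial.X (f k)) := by
      intro f
      rw [eval_mul, eval_C, map_prod (eval x)]
      simp only [eval_X]
      ring
    rw [Finset.sum_congr rfl fun f _ => h1 f, sum_prod_mul_E d l x,
      eval_mul, eval_C, map_pow]
    congr 2
    rw [Sp, map_sum]
    refine Finset.sum_congr rfl fun i _ => ?_
    rw [map_pow, eval_X]
  calc ∑ f : Fin l → Fin d, Efun d (∏ k, MvPolynomial.X (f k)) ^ 2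
      = ∑ f : Fin l → Fin d, Efun d
          (C (Efun d (∏ k, MvPolynomial.X (f k))) * ∏ k, MvPolynomial.X (f k)) := by
        refine Finset.sum_congr rfl fun f _ => ?_
        rw [Efun_C_mul, sq]
  _ = Efun d (C (dm l) * Sp d ^ (l / 2)) := by rw [← map_sum, hP]
  _ = dm l * ∏ k ∈ Finset.range (l / 2), ((d : ℝ) + 2 * k) := by
        rw [Efun_C_mul, Efun_Sp_pow]

lemma dfac_pos : ∀ n, 0 < dfac n
  | 0 => one_pos
  | 1 => one_pos
  | (n+2) => by
      rw [show dfac (n+2) = (n+2) * dfac n from rfl]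
      exact Nat.mul_pos (by omega) (dfac_pos n)

lemma dfac_rec (n : ℕ) (h : 1 ≤ n) : dfac n = n * dfac (n - 2) := by
  match n, h with
  | 0, h => exact absurd h (by omega)
  | 1, _ => simp [dfac]
  | (k+2), _ => rfl

lemma dm_even (l : ℕ) (h : Even l) : dm l = (dfac (l - 1) : ℝ) := by
  induction l using Nat.strong_induction_on with
  | _ l ih =>
    match l, h with
    | 0, _ => simp [dm, dfac]
    | 1, h => exact absurd h (by decide)
    | (n+2), h =>
      have hn : Even n := by rcases h with ⟨m, hm⟩; exact ⟨m-1, by omega⟩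
      rw [dm_add_two, ih n (by omega) hn, show n+2-1 = n+1 by omega,
        dfac_rec (n+1) (by omega), show n+1-2 = n-1 by omega]
      push_cast
      ring

lemma dfac_prod (d m : ℕ) (hd : 1 ≤ d) :
    dfac (d + 2*m - 2) = dfac (d - 2) * ∏ k ∈ Finset.range m, (d + 2*k) := by
  induction m with
  | zero => simp
  | succ m ih =>
    rw [show d + 2*(m+1) - 2 = d + 2*m by omega, dfac_rec (d + 2*m) (by omega),
      show d + 2*m - 2 = d + 2*m - 2 from rfl, ih, Finset.prod_range_succ]
    ring

end SidAux


/-- **Sidelnikov's inequality.** For a finite nonempty subset `X` of the unit sphere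
`S^{d-1}` and `l ∈ ℕ`, the average `(1/|X|²) ∑_{x,y∈X} (x⋅y)^l` is at least
`((l-1)!! (d-2)!!)/((d+l-2)!!)` if `l` is even, and at least `0` if `l` is odd. -/
theorem sidelnikov_inequality (d l : ℕ) (X : Finset (Euc d)) (hX : X.Nonempty)
    (hsph : ∀ x ∈ X, ‖x‖ = 1) :
    (1 / (X.card : ℝ) ^ 2) * ∑ x ∈ X, ∑ y ∈ X, (⟪x, y⟫ : ℝ) ^ l ≥
      (if Even l then (dfac (l - 1) * dfac (d - 2) : ℝ) / (dfac (d + l - 2) : ℝ)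
        else 0) := by
  classical
  rcases Nat.eq_zero_or_pos d with hd0 | hd
  · exfalso
    obtain ⟨x, hx⟩ := hX
    have h1 := hsph x hx
    subst hd0
    have hx0 : x = 0 := Subsingleton.elim x 0
    rw [hx0, norm_zero] at h1
    exact one_ne_zero h1.symm
  have hinner : ∀ x y : Euc d, (⟪x, y⟫ : ℝ) = ∑ i, x i * y i := by
    intro x y
    rw [PiLp.inner_apply]
    simp [RCLike.inner_apply]
    exact Finset.sum_congr rfl fun i _ => mul_comm _ _
  have hsum1 : ∀ x ∈ X, (∑ i, (x i : ℝ) ^ 2) = 1 := by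
    intro x hx
    have h1 : (⟪x, x⟫ : ℝ) = 1 := by
      rw [real_inner_self_eq_norm_sq, hsph x hx, one_pow]
    rw [hinner] at h1
    simpa [pow_two] using h1
  have hcpos : (0 : ℝ) < (X.card : ℝ) := by
    exact_mod_cast Finset.card_pos.mpr hX
  have hS : ∑ x ∈ X, ∑ y ∈ X, (⟪x, y⟫ : ℝ) ^ l
      = ∑ f : Fin l → Fin d, (∑ x ∈ X, ∏ k, x (f k)) ^ 2 := by
    have h1 : ∀ x y : Euc d, (⟪x, y⟫ : ℝ) ^ l
        = ∑ f : Fin l → Fin d, (∏ k, x (f k)) * ∏ k, y (f k) := by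
      intro x y
      rw [hinner, Fintype.sum_pow]
      exact Finset.sum_congr rfl fun f _ => by rw [Finset.prod_mul_distrib]
    calc ∑ x ∈ X, ∑ y ∈ X, (⟪x, y⟫ : ℝ) ^ l
        = ∑ x ∈ X, ∑ y ∈ X, ∑ f : Fin l → Fin d, (∏ k, x (f k)) * ∏ k, y (f k) :=
          Finset.sum_congr rfl fun x _ => Finset.sum_congr rfl fun y _ => h1 x y
    _ = ∑ x ∈ X, ∑ f : Fin l → Fin d, ∑ y ∈ X, (∏ k, x (f k)) * ∏ k, y (f k) :=
          Finset.sum_congr rfl fun x _ => Finset.sum_comm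
    _ = ∑ f : Fin l → Fin d, ∑ x ∈ X, ∑ y ∈ X, (∏ k, x (f k)) * ∏ k, y (f k) :=
          Finset.sum_comm
    _ = ∑ f : Fin l → Fin d, (∑ x ∈ X, ∏ k, x (f k)) ^ 2 := by
          refine Finset.sum_congr rfl fun f _ => ?_
          rw [sq, Finset.sum_mul_sum]
  have hA : ∑ f : Fin l → Fin d,
      (∑ x ∈ X, ∏ k, x (f k)) * SidAux.Efun d (∏ k, MvPolynomial.X (f k))
      = (X.card : ℝ) * SidAux.dm l := by
    calc ∑ f : Fin l → Fin d,
        (∑ x ∈ X, ∏ k, x (f k)) * SidAux.Efun d (∏ k, MvPolynomial.X (f k))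
        = ∑ f : Fin l → Fin d, ∑ x ∈ X,
            (∏ k, x (f k)) * SidAux.Efun d (∏ k, MvPolynomial.X (f k)) :=
          Finset.sum_congr rfl fun f _ => by rw [Finset.sum_mul]
    _ = ∑ x ∈ X, ∑ f : Fin l → Fin d,
            (∏ k, x (f k)) * SidAux.Efun d (∏ k, MvPolynomial.X (f k)) :=
          Finset.sum_comm
    _ = ∑ x ∈ X, SidAux.dm l := by
          refine Finset.sum_congr rfl fun x hx => ?_
          rw [SidAux.sum_prod_mul_E d l x, hsum1 x hx, one_pow, mul_one]
    _ = (X.card : ℝ) * SidAux.dm l := by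
          rw [Finset.sum_const, nsmul_eq_mul]
  by_cases hev : Even l
  · rw [if_pos hev, ge_iff_le, hS]
    have hdm : SidAux.dm l = (dfac (l-1) : ℝ) := SidAux.dm_even l hev
    have hdmpos : (0:ℝ) < SidAux.dm l := by
      rw [hdm]; exact_mod_cast SidAux.dfac_pos _
    have hDpos : (0:ℝ) < ∏ k ∈ Finset.range (l / 2), ((d : ℝ) + 2 * k) := by
      refine Finset.prod_pos fun k _ => ?_
      have h0 : (0:ℝ) < (d:ℝ) := by exact_mod_cast hd
      positivity
    have hCS := Finset.sum_mul_sq_le_sq_mul_sq Finset.univ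
      (fun f : Fin l → Fin d => ∑ x ∈ X, ∏ k, x (f k))
      (fun f : Fin l → Fin d => SidAux.Efun d (∏ k, MvPolynomial.X (f k)))
    rw [hA, SidAux.sum_M_sq d l] at hCS
    have hfac : (dfac (d + l - 2) : ℝ)
        = (dfac (d-2) : ℝ) * ∏ k ∈ Finset.range (l / 2), ((d : ℝ) + 2 * k) := by
      have hl2 : 2 * (l / 2) = l := by
        obtain ⟨k, hk⟩ := hev; omega
      have h1 := SidAux.dfac_prod d (l / 2) hd
      rw [show d + 2*(l/2) - 2 = d + l - 2 by omega] at h1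
      rw [h1]
      push_cast
      ring
    have hdfpos : (0:ℝ) < (dfac (d-2) : ℝ) := by exact_mod_cast SidAux.dfac_pos _
    rw [hfac, ← hdm, mul_comm (SidAux.dm l) ((dfac (d-2) : ℝ)),
      mul_div_mul_left _ _ (ne_of_gt hdfpos)]
    rw [div_le_iff₀ hDpos]
    have hc2 : (0:ℝ) < (X.card : ℝ)^2 := by positivity
    have h2 : ((X.card : ℝ)^2 * SidAux.dm l) * SidAux.dm l
        ≤ ((∑ f : Fin l → Fin d, (∑ x ∈ X, ∏ k, x (f k)) ^ 2)
            * ∏ k ∈ Finset.range (l / 2), ((d : ℝ) + 2 * k)) * SidAux.dm l := by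
      nlinarith [hCS]
    have h3 := le_of_mul_le_mul_right h2 hdmpos
    rw [show (1 / (X.card : ℝ)^2 * ∑ f : Fin l → Fin d, (∑ x ∈ X, ∏ k, x (f k)) ^ 2)
          * ∏ k ∈ Finset.range (l / 2), ((d : ℝ) + 2 * k)
        = ((∑ f : Fin l → Fin d, (∑ x ∈ X, ∏ k, x (f k)) ^ 2)
            * ∏ k ∈ Finset.range (l / 2), ((d : ℝ) + 2 * k)) / (X.card : ℝ)^2 by ring,
      le_div_iff₀ hc2]
    linarith [h3]
  · rw [if_neg hev, ge_iff_le, hS]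
    have hnn : (0:ℝ) ≤ ∑ f : Fin l → Fin d, (∑ x ∈ X, ∏ k, x (f k)) ^ 2 :=
      Finset.sum_nonneg fun f _ => sq_nonneg _
    have : (0:ℝ) ≤ 1 / (X.card : ℝ)^2 := by positivity
    exact mul_nonneg this hnn


end
end

section
/- Let X be a finite subset of R^d \ {0}, w : X → R a weight function, and l a nonnegative integer. Then sum over x,y in X of w(x)w(y)(x·y)^l is at least A_l * (sum over x in X of w(x)||x||^l)^2, where A_l = ((l-1)!!(d-2)!!)/((d+l-2)!!) if l is even and A_l = 0 if l is odd. -/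
open MeasureTheory MvPolynomial
open scoped BigOperators RealInnerProductSpace Classical

noncomputable section

namespace SidelnikovAux
open Finset Nat

lemma dfac_pos : ∀ n, 0 < dfac n
  | 0 => Nat.one_pos
  | 1 => Nat.one_pos
  | (n+2) => Nat.mul_pos (Nat.succ_pos _) (dfac_pos n)

lemma dfac_add_two (n : ℕ) : dfac (n+2) = (n+2) * dfac n := rfl

def gg (d m : ℕ) : ℕ :=
  ∑ b ∈ piAntidiag (univ : Finset (Fin d)) m, ∏ i, Nat.centralBinom (b i)

lemma gg_zero (d : ℕ) : gg d 0 = 1 := by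
  simp [gg, Nat.centralBinom_zero]

lemma gg_rec (d m : ℕ) : (m+1) * gg d (m+1) = 2 * (d + 2*m) * gg d m := by
  have key : ∀ i : Fin d,
      (∑ b ∈ piAntidiag (univ : Finset (Fin d)) (m+1), b i * ∏ j, Nat.centralBinom (b j))
      = ∑ c ∈ piAntidiag (univ : Finset (Fin d)) m,
          2 * (2 * c i + 1) * ∏ j, Nat.centralBinom (c j) := by
    intro i
    set δ : Fin d → ℕ := Pi.single i 1 with hδdef
    have hδ : ∑ j, δ j = 1 := by simp [hδdef]
    rw [← Finset.sum_filter_of_ne (p := fun b => b i ≠ 0)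
      (by intro b _ hb; intro h; exact hb (by simp [h]))]
    have main : ∀ c ∈ piAntidiag (univ : Finset (Fin d)) m,
        (fun j => c j + δ j) i * ∏ j, Nat.centralBinom (c j + δ j)
        = 2 * (2 * c i + 1) * ∏ j, Nat.centralBinom (c j) := by
      intro c _
      have hi : (fun j => c j + δ j) i = c i + 1 := by simp [hδdef]
      have hprod : ∏ j, Nat.centralBinom (c j + δ j)
          = Nat.centralBinom (c i + 1) * ∏ j ∈ univ.erase i, Nat.centralBinom (c j) := by
        rw [← Finset.mul_prod_erase univ _ (mem_univ i)]
        congr 1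
        · simp [hδdef]
        · refine Finset.prod_congr rfl fun j hj => ?_
          rw [hδdef, Pi.single_apply, if_neg (mem_erase.1 hj).1,
            add_zero]
      rw [hi, hprod, ← mul_assoc, Nat.succ_mul_centralBinom_succ, mul_assoc,
        ← Finset.mul_prod_erase univ (fun j => Nat.centralBinom (c j)) (mem_univ i), mul_assoc]
    refine (Finset.sum_nbij' (i := fun c => fun j => c j + δ j)
      (j := fun b => fun j => b j - δ j) ?_ ?_ ?_ ?_ (fun c hc => (main c hc).symm)).symm
    · intro c hc
      simp only [mem_piAntidiag, mem_univ, implies_true, and_true] at hc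
      simp only [mem_filter, mem_piAntidiag, mem_univ, implies_true, and_true]
      constructor
      · rw [Finset.sum_add_distrib, hδ, hc]
      · simp [hδdef]
    · intro b hb
      simp only [mem_filter, mem_piAntidiag, mem_univ, implies_true, and_true] at hb
      obtain ⟨hsum, hbi⟩ := hb
      simp only [mem_piAntidiag, mem_univ, implies_true, and_true]
      have hpt : ∀ j, (b j - δ j) + δ j = b j := by
        intro j
        rcases eq_or_ne j i with rfl | h
        · simp [hδdef]; omega
        · simp [hδdef, Pi.single_apply, h]
      have : (∑ j, (b j - δ j)) + 1 = m + 1 := by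
        rw [← hδ, ← Finset.sum_add_distrib]
        rw [hδ, Finset.sum_congr rfl fun j _ => hpt j, hsum]
      omega
    · intro c hc
      funext j
      simp [Nat.add_sub_cancel]
    · intro b hb
      simp only [mem_filter, mem_piAntidiag] at hb
      funext j
      rcases eq_or_ne j i with rfl | h
      · simp only [hδdef, Pi.single_eq_same]; omega
      · simp [hδdef, Pi.single_apply, h]
  calc (m+1) * gg d (m+1)
      = ∑ b ∈ piAntidiag (univ : Finset (Fin d)) (m+1),
          (∑ j, b j) * ∏ j, Nat.centralBinom (b j) := by
        rw [gg, Finset.mul_sum]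
        refine Finset.sum_congr rfl fun b hb => ?_
        rw [mem_piAntidiag] at hb
        rw [hb.1]
    _ = ∑ i : Fin d, ∑ b ∈ piAntidiag (univ : Finset (Fin d)) (m+1),
          b i * ∏ j, Nat.centralBinom (b j) := by
        rw [Finset.sum_comm]
        exact Finset.sum_congr rfl fun b _ => by rw [Finset.sum_mul]
    _ = ∑ i : Fin d, ∑ c ∈ piAntidiag (univ : Finset (Fin d)) m,
          2 * (2 * c i + 1) * ∏ j, Nat.centralBinom (c j) := by
        exact Finset.sum_congr rfl fun i _ => key i
    _ = 2 * (d + 2*m) * gg d m := by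
        rw [Finset.sum_comm, gg, Finset.mul_sum]
        refine Finset.sum_congr rfl fun c hc => ?_
        rw [mem_piAntidiag] at hc
        rw [← Finset.sum_mul]
        congr 1
        rw [← Finset.mul_sum, Finset.sum_add_distrib, Finset.sum_const, Finset.card_univ,
          Fintype.card_fin, ← Finset.mul_sum, hc.1, smul_eq_mul, mul_one]
        ring

lemma gg_closed (d : ℕ) : ∀ m : ℕ, gg d m * m ! = 2^m * ∏ i ∈ Finset.range m, (d + 2*i)
  | 0 => by simp [gg_zero]
  | (m+1) => by
    have h1 := gg_rec d m
    have h2 := gg_closed d m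
    rw [Finset.prod_range_succ, factorial_succ]
    calc gg d (m+1) * ((m+1) * m !) = ((m+1) * gg d (m+1)) * m ! := by ring
      _ = (2 * (d + 2*m)) * (gg d m * m !) := by rw [h1]; ring
      _ = (2 * (d + 2*m)) * (2^m * ∏ i ∈ Finset.range m, (d + 2*i)) := by rw [h2]
      _ = 2^(m+1) * ((∏ i ∈ Finset.range m, (d + 2*i)) * (d + 2*m)) := by ring

lemma dfac_odd_step (m : ℕ) : dfac (2*m+1) = (2*m+1) * dfac (2*m-1) := by
  cases m with
  | zero => simp [dfac]
  | succ k =>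
    have : 2*(k+1)+1 = (2*k+1)+2 := by ring
    rw [this, dfac_add_two]
    congr 2

lemma factorial_two_mul' : ∀ m : ℕ, (2*m)! = 2^m * m ! * dfac (2*m-1)
  | 0 => by simp [dfac]
  | (m+1) => by
    have h := factorial_two_mul' m
    have e1 : 2*(m+1) = 2*m+1+1 := by ring
    have e2 : 2*(m+1)-1 = 2*m+1 := by omega
    rw [e2, dfac_odd_step, e1, factorial_succ, factorial_succ, h, factorial_succ, pow_succ]
    ring

lemma dfac_prod_range (a : ℕ) : ∀ m : ℕ,
    dfac a * ∏ i ∈ Finset.range m, (a + 2 + 2*i) = dfac (a + 2*m)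
  | 0 => by simp
  | (m+1) => by
    have h := dfac_prod_range a m
    rw [Finset.prod_range_succ, ← mul_assoc, h]
    have : a + 2*(m+1) = (a + 2*m) + 2 := by ring
    rw [this, dfac_add_two]
    ring_nf

lemma dfac_one_prod (m : ℕ) : ∏ i ∈ Finset.range m, (1 + 2*i) = dfac (2*m-1) := by
  induction m with
  | zero => simp [dfac]
  | succ k ih =>
    rw [Finset.prod_range_succ, ih]
    have h3 : 2*(k+1)-1 = 2*k+1 := by omega
    rw [h3, dfac_odd_step]
    ring

/-- Key identity: for `d ≥ 1`, `(2m-1)!! (d-2)!! ((m!)² g(d,m)) = (d+2m-2)!! (2m)!`. -/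
lemma key_identity (d m : ℕ) (hd : 1 ≤ d) :
    dfac (2*m-1) * dfac (d-2) * ((m ! )^2 * gg d m) = dfac (d + 2*m - 2) * (2*m)! := by
  have h1 := gg_closed d m
  have h3 := factorial_two_mul' m
  have h2 : dfac (d-2) * ∏ i ∈ Finset.range m, (d + 2*i) = dfac (d + 2*m - 2) := by
    rcases Nat.lt_or_ge d 2 with hd2 | hd2
    · interval_cases d
      have e : 1 + 2*m - 2 = 2*m - 1 := by omega
      rw [e, ← dfac_one_prod, show dfac (1-2) = 1 from rfl, one_mul]
    · obtain ⟨a, rfl⟩ : ∃ a, d = a + 2 := ⟨d - 2, by omega⟩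
      have e1 : a + 2 - 2 = a := by omega
      have e2 : a + 2 + 2*m - 2 = a + 2*m := by omega
      rw [e1, e2, ← dfac_prod_range]
  calc dfac (2*m-1) * dfac (d-2) * ((m !)^2 * gg d m)
      = (dfac (d-2)) * (gg d m * m !) * (dfac (2*m-1) * m !) := by ring
    _ = (dfac (d-2)) * (2^m * ∏ i ∈ Finset.range m, (d + 2*i)) * (dfac (2*m-1) * m !) := by
        rw [h1]
    _ = (dfac (d-2) * ∏ i ∈ Finset.range m, (d + 2*i)) * (2^m * m ! * dfac (2*m-1)) := by ring
    _ = dfac (d + 2*m - 2) * (2*m)! := by rw [h2, h3]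

lemma perterm (d m : ℕ) (b : Fin d → ℕ) (hb : ∑ i, b i = m) :
    (Nat.multinomial univ b)^2 * (2*m)! =
      (m !)^2 * Nat.multinomial univ (fun i => 2 * b i) * ∏ i, Nat.centralBinom (b i) := by
  have s1 : (∏ i, (b i)!) * Nat.multinomial univ b = m ! := by
    rw [Nat.multinomial_spec, hb]
  have s2 : (∏ i, (2*b i)!) * Nat.multinomial univ (fun i => 2*b i) = (2*m)! := by
    rw [Nat.multinomial_spec, ← Finset.mul_sum, hb]
  have s3 : ∀ i, Nat.centralBinom (b i) * ((b i)! * (b i)!) = (2 * b i)! := by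
    intro i
    have h := Nat.choose_mul_factorial_mul_factorial
      (show b i ≤ 2 * b i by omega)
    have e : 2 * b i - b i = b i := by omega
    rw [e] at h
    rw [Nat.centralBinom, ← mul_assoc]
    exact h
  have hprod : (∏ i, Nat.centralBinom (b i)) * ((∏ i, (b i)!) * (∏ i, (b i)!))
      = ∏ i, (2*b i)! := by
    rw [← Finset.prod_mul_distrib, ← Finset.prod_mul_distrib]
    exact Finset.prod_congr rfl fun i _ => s3 i
  apply Nat.eq_of_mul_eq_mul_right
    (show 0 < ((∏ i, (b i)!) * (∏ i, (b i)!)) * ∏ i, (2*b i)! by positivity)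
  calc (Nat.multinomial univ b)^2 * (2*m)! * (((∏ i, (b i)!) * (∏ i, (b i)!)) * ∏ i, (2*b i)!)
      = ((∏ i, (b i)!) * Nat.multinomial univ b) * ((∏ i, (b i)!) * Nat.multinomial univ b)
          * ((2*m)! * ∏ i, (2*b i)!) := by ring
    _ = m ! * m ! * ((2*m)! * ∏ i, (2*b i)!) := by rw [s1]
    _ = (m !)^2 * (((∏ i, (2*b i)!) * Nat.multinomial univ (fun i => 2*b i)))
          * ((∏ i, Nat.centralBinom (b i)) * ((∏ i, (b i)!) * (∏ i, (b i)!))) := by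
        rw [s2, hprod]; ring
    _ = (m !)^2 * Nat.multinomial univ (fun i => 2 * b i) * (∏ i, Nat.centralBinom (b i)) *
          (((∏ i, (b i)!) * (∏ i, (b i)!)) * ∏ i, (2*b i)!) := by ring

lemma C_closed (d m : ℕ) (hd : 1 ≤ d) :
    ((dfac (2*m-1) * dfac (d-2) : ℕ) : ℝ) / ((dfac (d+2*m-2) : ℕ) : ℝ) *
      ∑ b ∈ piAntidiag (univ : Finset (Fin d)) m,
        ((Nat.multinomial univ b : ℝ)^2 / (Nat.multinomial univ (fun i => 2 * b i) : ℝ)) = 1 := by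
  have hsum : ∑ b ∈ piAntidiag (univ : Finset (Fin d)) m,
      ((Nat.multinomial univ b : ℝ)^2 / (Nat.multinomial univ (fun i => 2 * b i) : ℝ))
      = ((m ! : ℝ)^2 / ((2*m)! : ℝ)) * (gg d m : ℝ) := by
    have : (gg d m : ℝ) = ∑ b ∈ piAntidiag (univ : Finset (Fin d)) m,
        ∏ i, (Nat.centralBinom (b i) : ℝ) := by
      rw [gg]; push_cast; rfl
    rw [this, Finset.mul_sum]
    refine Finset.sum_congr rfl fun b hb => ?_
    have hbsum : ∑ i, b i = m := (Finset.mem_piAntidiag.1 hb).1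
    rw [div_mul_eq_mul_div, div_eq_div_iff
      (by exact_mod_cast (Nat.multinomial_pos _ _).ne')
      (by exact_mod_cast (Nat.factorial_pos _).ne')]
    have h := congrArg (fun n : ℕ => (n : ℝ)) (perterm d m b hbsum)
    push_cast at h
    linear_combination h
  rw [hsum]
  have hkey := key_identity d m hd
  have h1 : (0:ℝ) < (dfac (d+2*m-2) : ℝ) := by exact_mod_cast dfac_pos _
  have h2 : (0:ℝ) < ((2*m)! : ℝ) := by exact_mod_cast Nat.factorial_pos _
  field_simp
  have := congrArg (fun n : ℕ => (n : ℝ)) hkey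
  push_cast at this
  push_cast; linear_combination this

end SidelnikovAux

open Finset in
/-- **Generalized Sidelnikov inequality** (Neumaier–Seidel). -/
theorem generalized_sidelnikov (d l : ℕ) (X : Finset (Euc d))
    (h0 : (0 : Euc d) ∉ X) (w : Euc d → ℝ) :
    (∑ x ∈ X, ∑ y ∈ X, w x * w y * (⟪x, y⟫ : ℝ) ^ l) ≥
      (if Even l then (dfac (l - 1) * dfac (d - 2) : ℝ) / (dfac (d + l - 2) : ℝ)
        else 0) * (∑ x ∈ X, w x * ‖x‖ ^ l) ^ 2 := by
  classical
  open SidelnikovAux in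
  rcases Nat.eq_zero_or_pos d with rfl | hd
  · -- `d = 0`: `X` is empty
    have hX : X = ∅ := Finset.eq_empty_of_forall_notMem fun x hx => by
      have hx0 : x = 0 := PiLp.ext fun i => i.elim0
      exact h0 (hx0 ▸ hx)
    subst hX
    simp
  -- notation
  set S : (Fin d → ℕ) → ℝ := fun k => ∑ x ∈ X, w x * ∏ i, (x i) ^ (k i) with hS
  have hinner : ∀ x y : Euc d, (⟪x,y⟫:ℝ) = ∑ i, x i * y i := fun x y => by
    simp [PiLp.inner_apply, RCLike.inner_apply, conj_trivial]; exact Finset.sum_congr rfl fun i _ => mul_comm _ _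
  -- Step A: expansion of the LHS
  have hA : (∑ x ∈ X, ∑ y ∈ X, w x * w y * (⟪x, y⟫:ℝ)^l)
      = ∑ k ∈ piAntidiag (univ : Finset (Fin d)) l,
          (Nat.multinomial univ k : ℝ) * S k ^ 2 := by
    have expand : ∀ x ∈ X, ∀ y ∈ X, w x * w y * (⟪x,y⟫:ℝ)^l
        = ∑ k ∈ piAntidiag (univ : Finset (Fin d)) l, (Nat.multinomial univ k : ℝ) *
            ((w x * ∏ i, x i ^ k i) * (w y * ∏ i, y i ^ k i)) := by
      intro x _ y _
      rw [hinner, Finset.sum_pow_eq_sum_piAntidiag, Finset.mul_sum]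
      refine Finset.sum_congr rfl fun k _ => ?_
      simp_rw [mul_pow, Finset.prod_mul_distrib]
      ring
    rw [Finset.sum_congr rfl fun x hx => Finset.sum_congr rfl fun y hy => expand x hx y hy]
    rw [Finset.sum_congr rfl fun x _ => Finset.sum_comm, Finset.sum_comm]
    refine Finset.sum_congr rfl fun k _ => ?_
    rw [sq, Finset.sum_mul_sum, Finset.mul_sum]
    exact Finset.sum_congr rfl fun x _ => by rw [Finset.mul_sum]
  have hLHSnonneg : ∀ k ∈ piAntidiag (univ : Finset (Fin d)) l,
      (0:ℝ) ≤ (Nat.multinomial univ k : ℝ) * S k ^ 2 := fun k _ => by positivity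
  rcases Nat.even_or_odd l with heven | hodd
  case inr =>
    -- odd case
    rw [if_neg (Nat.not_even_iff_odd.2 hodd), zero_mul, ge_iff_le, hA]
    exact Finset.sum_nonneg hLHSnonneg
  case inl =>
  obtain ⟨m', hm'⟩ := heven
  obtain ⟨m, hm⟩ : ∃ m, l = 2 * m := ⟨m', by omega⟩
  clear hm'
  subst hm
  rw [if_pos (even_two_mul m)]
  -- Step B: expansion of `T`
  have hnorm : ∀ x : Euc d, ‖x‖^(2*m) = ∑ b ∈ piAntidiag (univ : Finset (Fin d)) m,
      (Nat.multinomial univ b : ℝ) * ∏ i, x i ^ (2 * b i) := by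
    intro x
    have h1 : ‖x‖^(2*m) = (∑ i, x i ^ 2)^m := by
      rw [pow_mul, ← Real.sq_sqrt (by positivity : (0:ℝ) ≤ ∑ i, x i ^ 2)]
      congr 2
      rw [EuclideanSpace.norm_eq]
      congr 1
      exact Finset.sum_congr rfl fun i _ => by rw [Real.norm_eq_abs, sq_abs]
    rw [h1, Finset.sum_pow_eq_sum_piAntidiag]
    exact Finset.sum_congr rfl fun b _ => by
      congr 1
      exact Finset.prod_congr rfl fun i _ => by rw [← pow_mul]
  have hT : (∑ x ∈ X, w x * ‖x‖^(2*m))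
      = ∑ b ∈ piAntidiag (univ : Finset (Fin d)) m,
          (Nat.multinomial univ b : ℝ) * S (fun i => 2 * b i) := by
    rw [Finset.sum_congr rfl fun x _ => by rw [hnorm x, Finset.mul_sum], Finset.sum_comm]
    refine Finset.sum_congr rfl fun b _ => ?_
    rw [hS, Finset.mul_sum]
    exact Finset.sum_congr rfl fun x _ => by ring
  -- Cauchy-Schwarz
  have hq : ∀ b : Fin d → ℕ, (0:ℝ) < (Nat.multinomial univ (fun i => 2 * b i) : ℝ) :=
    fun b => by exact_mod_cast Nat.multinomial_pos _ _
  set C : ℝ := ∑ b ∈ piAntidiag (univ : Finset (Fin d)) m,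
      ((Nat.multinomial univ b : ℝ)^2 / (Nat.multinomial univ (fun i => 2 * b i) : ℝ)) with hC
  set V : ℝ := ∑ b ∈ piAntidiag (univ : Finset (Fin d)) m,
      (Nat.multinomial univ (fun i => 2 * b i) : ℝ) * S (fun i => 2 * b i) ^ 2 with hV
  have hCS : (∑ x ∈ X, w x * ‖x‖^(2*m))^2 ≤ C * V := by
    rw [hT]
    have := Finset.sum_mul_sq_le_sq_mul_sq (piAntidiag (univ : Finset (Fin d)) m)
      (fun b => (Nat.multinomial univ b : ℝ) / Real.sqrt (Nat.multinomial univ (fun i => 2 * b i)))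
      (fun b => Real.sqrt (Nat.multinomial univ (fun i => 2 * b i)) * S (fun i => 2 * b i))
    have e1 : ∀ b : Fin d → ℕ,
        ((Nat.multinomial univ b : ℝ) / Real.sqrt (Nat.multinomial univ (fun i => 2 * b i))) *
          (Real.sqrt (Nat.multinomial univ (fun i => 2 * b i)) * S (fun i => 2 * b i))
        = (Nat.multinomial univ b : ℝ) * S (fun i => 2 * b i) := fun b => by
      have hs : Real.sqrt (Nat.multinomial univ (fun i => 2 * b i)) ≠ 0 :=
        ne_of_gt (Real.sqrt_pos.2 (hq b))
      field_simp
    have e2 : ∀ b : Fin d → ℕ,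
        ((Nat.multinomial univ b : ℝ) / Real.sqrt (Nat.multinomial univ (fun i => 2 * b i)))^2
        = (Nat.multinomial univ b : ℝ)^2 / (Nat.multinomial univ (fun i => 2 * b i) : ℝ) :=
      fun b => by rw [div_pow, Real.sq_sqrt (hq b).le]
    have e3 : ∀ b : Fin d → ℕ,
        (Real.sqrt (Nat.multinomial univ (fun i => 2 * b i)) * S (fun i => 2 * b i))^2
        = (Nat.multinomial univ (fun i => 2 * b i) : ℝ) * S (fun i => 2 * b i)^2 :=
      fun b => by rw [mul_pow, Real.sq_sqrt (hq b).le]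
    calc (∑ b ∈ piAntidiag (univ : Finset (Fin d)) m,
            (Nat.multinomial univ b : ℝ) * S (fun i => 2 * b i))^2
        = (∑ b ∈ piAntidiag (univ : Finset (Fin d)) m,
            ((Nat.multinomial univ b : ℝ) / Real.sqrt (Nat.multinomial univ (fun i => 2 * b i))) *
            (Real.sqrt (Nat.multinomial univ (fun i => 2 * b i)) * S (fun i => 2 * b i)))^2 := by
          rw [Finset.sum_congr rfl fun b _ => (e1 b).symm]
      _ ≤ _ := this
      _ = C * V := by
          rw [hC, hV, Finset.sum_congr rfl fun b _ => e2 b, Finset.sum_congr rfl fun b _ => e3 b]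
  -- V ≤ LHS
  have hVle : V ≤ ∑ k ∈ piAntidiag (univ : Finset (Fin d)) (2*m),
      (Nat.multinomial univ k : ℝ) * S k ^ 2 := by
    have hinj : ∀ b ∈ piAntidiag (univ : Finset (Fin d)) m,
        ∀ c ∈ piAntidiag (univ : Finset (Fin d)) m,
        (fun i => 2 * b i) = (fun i => 2 * c i) → b = c := by
      intro b _ c _ h
      funext i
      have := congrFun h i
      omega
    have himg : (piAntidiag (univ : Finset (Fin d)) m).image (fun b => fun i => 2 * b i)
        ⊆ piAntidiag (univ : Finset (Fin d)) (2*m) := by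
      intro k hk
      obtain ⟨b, hb, rfl⟩ := Finset.mem_image.1 hk
      rw [Finset.mem_piAntidiag] at hb ⊢
      exact ⟨by rw [← Finset.mul_sum, hb.1], fun i _ => mem_univ i⟩
    calc V = ∑ k ∈ (piAntidiag (univ : Finset (Fin d)) m).image (fun b => fun i => 2 * b i),
          (Nat.multinomial univ k : ℝ) * S k ^ 2 := by
            rw [hV, Finset.sum_image hinj]
      _ ≤ _ := Finset.sum_le_sum_of_subset_of_nonneg himg fun k hk _ => hLHSnonneg k hk
  have hCnonneg : 0 ≤ C := Finset.sum_nonneg fun b _ => by positivity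
  have hAC := C_closed d m hd
  have hcast : ((dfac (2*m - 1) * dfac (d - 2) : ℝ) / (dfac (d + 2*m - 2) : ℝ))
      = ((dfac (2*m-1) * dfac (d-2) : ℕ) : ℝ) / ((dfac (d+2*m-2) : ℕ) : ℝ) := by push_cast; ring
  have hAnonneg : (0:ℝ) ≤ (dfac (2*m - 1) * dfac (d - 2) : ℝ) / (dfac (d + 2*m - 2) : ℝ) := by
    positivity
  calc (dfac (2*m - 1) * dfac (d - 2) : ℝ) / (dfac (d + 2*m - 2) : ℝ) *
        (∑ x ∈ X, w x * ‖x‖ ^ (2*m)) ^ 2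
      ≤ (dfac (2*m - 1) * dfac (d - 2) : ℝ) / (dfac (d + 2*m - 2) : ℝ) * (C * V) :=
        mul_le_mul_of_nonneg_left hCS hAnonneg
    _ ≤ (dfac (2*m - 1) * dfac (d - 2) : ℝ) / (dfac (d + 2*m - 2) : ℝ) *
        (C * ∑ k ∈ piAntidiag (univ : Finset (Fin d)) (2*m),
          (Nat.multinomial univ k : ℝ) * S k ^ 2) := by
        apply mul_le_mul_of_nonneg_left _ hAnonneg
        exact mul_le_mul_of_nonneg_left hVle hCnonneg
    _ = ∑ k ∈ piAntidiag (univ : Finset (Fin d)) (2*m),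
          (Nat.multinomial univ k : ℝ) * S k ^ 2 := by
        rw [← mul_assoc, hcast, hAC, one_mul]
    _ = _ := hA.symm

end
end

section
/- Let RS be a union of p concentric spheres about the origin in R^d with positive radii. Then the restriction of Hom'_j(R^d) := Hom_j(R^d) + ||x||Hom_{j-1}(R^d) to RS decomposes as a direct sum: Hom'_j(RS) = Hom_j(RS) ⊕ (||x||Hom_{j-1})(RS). -/
open MeasureTheory MvPolynomial
open scoped BigOperators RealInnerProductSpace Classical

noncomputable section

lemma eval_neg_homog {d n : ℕ} {q : MvPolynomial (Fin d) ℝ} (hq : q.IsHomogeneous n)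
    (v : Fin d → ℝ) : eval (fun i => -(v i)) q = (-1 : ℝ) ^ n * eval v q := by
  rw [eval_eq, eval_eq, Finset.mul_sum]
  refine Finset.sum_congr rfl fun m hm => ?_
  have hd : ∑ i ∈ m.support, m i = n := by
    have h := hq (MvPolynomial.mem_support_iff.mp hm)
    rw [← h, Finsupp.weight_apply, Finsupp.sum]
    simp
  rw [← hd]
  have hstep : ∀ i ∈ m.support, (-(v i)) ^ (m i) = (-1 : ℝ) ^ (m i) * v i ^ m i :=
    fun i _ => neg_pow (v i) (m i)
  rw [Finset.prod_congr rfl hstep, Finset.prod_mul_distrib, Finset.prod_pow_eq_pow_sum]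
  ring

lemma homOn_mem {d j : ℕ} {T : Set (Euc d)} {f : T → ℝ} (hf : f ∈ HomOn d j T) :
    ∃ q : MvPolynomial (Fin d) ℝ, q.IsHomogeneous j ∧
      ∀ x : T, f x = eval (fun i => (x : Euc d) i) q := by
  induction hf using Submodule.span_induction with
  | mem g hg =>
    obtain ⟨q, hq, rfl⟩ := hg
    exact ⟨q, hq, fun x => rfl⟩
  | zero => exact ⟨0, isHomogeneous_zero _ _ _, by simp⟩
  | add g h _ _ hg hh =>
    obtain ⟨q1, hq1, he1⟩ := hg
    obtain ⟨q2, hq2, he2⟩ := hh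
    exact ⟨q1 + q2, hq1.add hq2, fun x => by simp [he1 x, he2 x]⟩
  | smul c g _ hg =>
    obtain ⟨q, hq, he⟩ := hg
    refine ⟨c • q, ?_, fun x => by simp [he x]⟩
    exact Submodule.smul_mem _ c ((mem_homogeneousSubmodule _ _).mpr hq)

lemma normHomOn_mem {d k : ℕ} {T : Set (Euc d)} {f : T → ℝ} (hf : f ∈ NormHomOn d k T) :
    ∃ q : MvPolynomial (Fin d) ℝ, q.IsHomogeneous k ∧
      ∀ x : T, f x = ‖(x : Euc d)‖ * eval (fun i => (x : Euc d) i) q := by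
  induction hf using Submodule.span_induction with
  | mem g hg =>
    obtain ⟨q, hq, rfl⟩ := hg
    exact ⟨q, hq, fun x => rfl⟩
  | zero => exact ⟨0, isHomogeneous_zero _ _ _, by simp⟩
  | add g h _ _ hg hh =>
    obtain ⟨q1, hq1, he1⟩ := hg
    obtain ⟨q2, hq2, he2⟩ := hh
    refine ⟨q1 + q2, hq1.add hq2, fun x => by simp [he1 x, he2 x]; ring⟩
  | smul c g _ hg =>
    obtain ⟨q, hq, he⟩ := hg
    refine ⟨c • q, ?_, fun x => by simp [he x]; ring⟩
    exact Submodule.smul_mem _ c ((mem_homogeneousSubmodule _ _).mpr hq)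

/-- The restriction of `Hom'_j(ℝ^d) = Hom_j(ℝ^d) + ‖x‖ Hom_{j-1}(ℝ^d)` to a union `RS` of
concentric spheres of positive radii decomposes as a direct sum
`Hom'_j(RS) = Hom_j(RS) ⊕ (‖x‖ Hom_{j-1})(RS)`. -/
theorem homOn'_direct_sum (d p j : ℕ) (hj : 1 ≤ j) (r : Fin p → ℝ)
    (hrpos : ∀ i, 0 < r i) (hrinj : Function.Injective r) :
    (HomOn' d j (⋃ i, Metric.sphere (0 : Euc d) (r i)) =
        HomOn d j (⋃ i, Metric.sphere (0 : Euc d) (r i)) ⊔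
          NormHomOn d (j - 1) (⋃ i, Metric.sphere (0 : Euc d) (r i))) ∧
      Disjoint (HomOn d j (⋃ i, Metric.sphere (0 : Euc d) (r i)))
        (NormHomOn d (j - 1) (⋃ i, Metric.sphere (0 : Euc d) (r i))) := by
  refine ⟨rfl, ?_⟩
  rw [Submodule.disjoint_def]
  intro f hf hg
  obtain ⟨P, hP, hfP⟩ := homOn_mem hf
  obtain ⟨Q, hQ, hfQ⟩ := normHomOn_mem hg
  funext x
  have hx : (x : Euc d) ∈ ⋃ i, Metric.sphere (0 : Euc d) (r i) := x.2
  have hnx : -(x : Euc d) ∈ ⋃ i, Metric.sphere (0 : Euc d) (r i) := by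
    rw [Set.mem_iUnion] at hx
    obtain ⟨i, hi⟩ := hx
    exact Set.mem_iUnion.mpr ⟨i, by simpa [mem_sphere_zero_iff_norm] using hi⟩
  set y : (⋃ i, Metric.sphere (0 : Euc d) (r i) : Set (Euc d)) := ⟨-(x : Euc d), hnx⟩ with hy
  have h1 : eval (fun i => (x : Euc d) i) P = ‖(x : Euc d)‖ * eval (fun i => (x : Euc d) i) Q :=
    (hfP x).symm.trans (hfQ x)
  have h2 := (hfP y).symm.trans (hfQ y)
  have hyc : (y : Euc d) = -(x : Euc d) := rfl
  rw [hyc, norm_neg] at h2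
  have hev : ∀ (n : ℕ) (q : MvPolynomial (Fin d) ℝ), q.IsHomogeneous n →
      eval (fun i => (-(x : Euc d)) i) q
        = (-1 : ℝ) ^ n * eval (fun i => (x : Euc d) i) q := by
    intro n q hq
    have := eval_neg_homog hq (fun i => (x : Euc d) i)
    simpa using this
  rw [hev j P hP, hev (j-1) Q hQ] at h2
  have hpow : ((-1 : ℝ)) ^ j = -((-1 : ℝ) ^ (j - 1)) := by
    conv_lhs => rw [(Nat.succ_pred_eq_of_pos hj).symm]
    rw [pow_succ, Nat.pred_eq_sub_one]; ring
  rw [hpow] at h2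
  have hc : ((-1 : ℝ) ^ (j - 1)) ≠ 0 := by positivity
  have h4 : (-1 : ℝ) ^ (j - 1) * (2 * eval (fun i => (x : Euc d) i) P) = 0 := by
    linear_combination ((-1 : ℝ) ^ (j - 1)) * h1 - h2
  have hP0 : eval (fun i => (x : Euc d) i) P = 0 := by
    rcases mul_eq_zero.mp h4 with h | h
    · exact absurd h hc
    · linarith
  have : f x = 0 := by rw [hfP x, hP0]
  simpa using this


end
end

section
/- Let RS be the union of p concentric spheres of distinct positive radii r_1,...,r_p about the origin in R^d. For every f in Hom'_j(R^d) = Hom_j(R^d) + ||x||Hom_{j-1}(R^d), the restriction of f to RS lies in the sum over i = 1,...,p of Hom'_{j+i}(RS). -/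
open MeasureTheory MvPolynomial
open scoped BigOperators RealInnerProductSpace Classical

noncomputable section

open Matrix in
lemma exists_coeffs_aux {p : ℕ} (r : Fin p → ℝ) (hr : ∀ i, r i ≠ 0)
    (hinj : Function.Injective r) :
    ∃ c : Fin p → ℝ, ∀ i, ∑ k : Fin p, c k * r i ^ ((k : ℕ) + 1) = 1 := by
  set M : Matrix (Fin p) (Fin p) ℝ := Matrix.of fun i k => r i * (r i) ^ (k : ℕ) with hM
  have hdet : M.det ≠ 0 := by
    have hdm : M.det = (∏ i, r i) * (Matrix.vandermonde r).det :=
      Matrix.det_mul_column r (Matrix.vandermonde r)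
    rw [hdm]
    refine mul_ne_zero (Finset.prod_ne_zero_iff.2 fun i _ => hr i) ?_
    rw [Matrix.det_vandermonde_ne_zero_iff]
    exact hinj
  refine ⟨M⁻¹.mulVec 1, fun i => ?_⟩
  have h1 : M.mulVec (M⁻¹.mulVec 1) = 1 := by
    rw [Matrix.mulVec_mulVec, Matrix.mul_nonsing_inv _ (isUnit_iff_ne_zero.2 hdet),
      Matrix.one_mulVec]
  have h2 := congrFun h1 i
  rw [Matrix.mulVec, dotProduct] at h2
  simp only [hM, Matrix.of_apply] at h2
  rw [Pi.one_apply] at h2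
  rw [← h2]
  apply Finset.sum_congr rfl
  intro k _
  ring

def nsqPoly (d : ℕ) : MvPolynomial (Fin d) ℝ := ∑ i : Fin d, X i ^ 2

lemma nsqPoly_homog (d : ℕ) : (nsqPoly d).IsHomogeneous 2 :=
  IsHomogeneous.sum _ _ _ fun i _ => (isHomogeneous_X ℝ i).pow 2

lemma eval_nsqPoly {d : ℕ} (x : Euc d) :
    eval (fun i => x i) (nsqPoly d) = ‖x‖ ^ 2 := by
  rw [nsqPoly]
  simp only [map_sum, eval_pow, eval_X]
  rw [EuclideanSpace.norm_eq, Real.sq_sqrt (by positivity)]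
  simp [Real.norm_eq_abs, sq_abs]

lemma eval_nsqPoly_pow {d : ℕ} (m : ℕ) (x : Euc d) :
    eval (fun i => x i) (nsqPoly d ^ m) = ‖x‖ ^ (2 * m) := by
  rw [map_pow, eval_nsqPoly, ← pow_mul]

lemma mem_homOn_of {d J : ℕ} {T : Set (Euc d)} {q : MvPolynomial (Fin d) ℝ}
    (hq : q.IsHomogeneous J) :
    restrictFun T (fun x => eval (fun i => x i) q) ∈ HomOn d J T :=
  Submodule.subset_span ⟨q, hq, rfl⟩

lemma mem_normHomOn_of {d J : ℕ} {T : Set (Euc d)} {q : MvPolynomial (Fin d) ℝ}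
    (hq : q.IsHomogeneous J) :
    restrictFun T (fun x => ‖x‖ * eval (fun i => x i) q) ∈ NormHomOn d J T :=
  Submodule.subset_span ⟨q, hq, rfl⟩

/-- For `RS` a union of `p` concentric spheres of distinct positive radii, the restriction
to `RS` of any element of `Hom'_j(ℝ^d)` lies in `∑_{i=1}^{p} Hom'_{j+i}(RS)`. -/
theorem homOn'_shift (d p j : ℕ) (hj : 1 ≤ j) (r : Fin p → ℝ)
    (hrpos : ∀ i, 0 < r i) (hrinj : Function.Injective r)
    (f g : MvPolynomial (Fin d) ℝ)
    (hf : f.IsHomogeneous j) (hg : g.IsHomogeneous (j - 1)) :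
    restrictFun (⋃ i, Metric.sphere (0 : Euc d) (r i))
        (fun x => eval (fun k => x k) f + ‖x‖ * eval (fun k => x k) g) ∈
      ⨆ i : Fin p, HomOn' d (j + (i : ℕ) + 1) (⋃ i, Metric.sphere (0 : Euc d) (r i)) := by
  set T := ⋃ i, Metric.sphere (0 : Euc d) (r i) with hT
  obtain ⟨c, hc⟩ := exists_coeffs_aux r (fun i => (hrpos i).ne') hrinj
  have key : restrictFun T
      (fun x => eval (fun k => x k) f + ‖x‖ * eval (fun k => x k) g) =
      ∑ k : Fin p, c k • restrictFun T
        (fun x => ‖x‖ ^ ((k : ℕ) + 1) * eval (fun i => x i) f +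
          ‖x‖ ^ ((k : ℕ) + 2) * eval (fun i => x i) g) := by
    funext x
    obtain ⟨i, hi⟩ : ∃ i, ‖(x : Euc d)‖ = r i := by
      obtain ⟨i, hxi⟩ := Set.mem_iUnion.mp x.2
      exact ⟨i, mem_sphere_zero_iff_norm.mp hxi⟩
    simp only [Finset.sum_apply, Pi.smul_apply, restrictFun, smul_eq_mul]
    have hterm : ∀ k : Fin p,
        c k * (‖(x : Euc d)‖ ^ ((k : ℕ) + 1) * eval (fun i => (x : Euc d) i) f +
          ‖(x : Euc d)‖ ^ ((k : ℕ) + 2) * eval (fun i => (x : Euc d) i) g) =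
        (c k * ‖(x : Euc d)‖ ^ ((k : ℕ) + 1)) *
          (eval (fun i => (x : Euc d) i) f + ‖(x : Euc d)‖ * eval (fun i => (x : Euc d) i) g) := by
      intro k; ring
    rw [Finset.sum_congr rfl (fun k _ => hterm k), ← Finset.sum_mul]
    have hsum : ∑ k : Fin p, c k * ‖(x : Euc d)‖ ^ ((k : ℕ) + 1) = 1 := by
      rw [hi]; exact hc i
    rw [hsum, one_mul]
  rw [key]
  apply Submodule.sum_mem
  intro k _
  apply Submodule.smul_mem
  refine le_iSup (fun i : Fin p => HomOn' d (j + (i : ℕ) + 1) T) k ?_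
  have hsplit : restrictFun T
      (fun x => ‖x‖ ^ ((k : ℕ) + 1) * eval (fun i => x i) f +
        ‖x‖ ^ ((k : ℕ) + 2) * eval (fun i => x i) g) =
      restrictFun T (fun x => ‖x‖ ^ ((k : ℕ) + 1) * eval (fun i => x i) f) +
      restrictFun T (fun x => ‖x‖ ^ ((k : ℕ) + 2) * eval (fun i => x i) g) := rfl
  rw [hsplit]
  unfold HomOn'
  beta_reduce
  have hdeg : j + (k : ℕ) + 1 - 1 = j + (k : ℕ) := by omega
  rw [hdeg]
  rcases Nat.even_or_odd ((k : ℕ) + 1) with ⟨m, hm⟩ | ⟨m, hm⟩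
  · -- (k:ℕ)+1 = 2m : first term in HomOn, second in NormHomOn
    have hA : restrictFun T (fun x => ‖x‖ ^ ((k : ℕ) + 1) * eval (fun i => x i) f) =
        restrictFun T (fun x => eval (fun i => x i) (nsqPoly d ^ m * f)) := by
      funext x
      simp only [restrictFun, map_mul, eval_nsqPoly_pow]
      congr 2 <;> omega
    have hB : restrictFun T (fun x => ‖x‖ ^ ((k : ℕ) + 2) * eval (fun i => x i) g) =
        restrictFun T (fun x => ‖x‖ * eval (fun i => x i) (nsqPoly d ^ m * g)) := by
      funext x
      simp only [restrictFun, map_mul, eval_nsqPoly_pow]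
      rw [← mul_assoc, ← pow_succ']
      congr 2 <;> omega
    have hAm : (nsqPoly d ^ m * f).IsHomogeneous (j + (k : ℕ) + 1) := by
      have h := ((nsqPoly_homog d).pow m).mul hf
      rwa [show 2 * m + j = j + (k : ℕ) + 1 from by omega] at h
    have hBm : (nsqPoly d ^ m * g).IsHomogeneous (j + (k : ℕ)) := by
      have h := ((nsqPoly_homog d).pow m).mul hg
      rwa [show 2 * m + (j - 1) = j + (k : ℕ) from by omega] at h
    rw [hA, hB]
    exact Submodule.add_mem_sup (mem_homOn_of hAm) (mem_normHomOn_of hBm)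
  · -- (k:ℕ)+1 = 2m+1 : first term in NormHomOn, second in HomOn
    have hA : restrictFun T (fun x => ‖x‖ ^ ((k : ℕ) + 1) * eval (fun i => x i) f) =
        restrictFun T (fun x => ‖x‖ * eval (fun i => x i) (nsqPoly d ^ m * f)) := by
      funext x
      simp only [restrictFun, map_mul, eval_nsqPoly_pow]
      rw [← mul_assoc, ← pow_succ']
      congr 2 <;> omega
    have hB : restrictFun T (fun x => ‖x‖ ^ ((k : ℕ) + 2) * eval (fun i => x i) g) =
        restrictFun T (fun x => eval (fun i => x i) (nsqPoly d ^ (m + 1) * g)) := by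
      funext x
      simp only [restrictFun, map_mul, eval_nsqPoly_pow]
      congr 2 <;> omega
    have hAm : (nsqPoly d ^ m * f).IsHomogeneous (j + (k : ℕ)) := by
      have h := ((nsqPoly_homog d).pow m).mul hf
      rwa [show 2 * m + j = j + (k : ℕ) from by omega] at h
    have hBm : (nsqPoly d ^ (m + 1) * g).IsHomogeneous (j + (k : ℕ) + 1) := by
      have h := ((nsqPoly_homog d).pow (m + 1)).mul hg
      rwa [show 2 * (m + 1) + (j - 1) = j + (k : ℕ) + 1 from by omega] at h
    rw [hA, hB]
    exact Submodule.add_mem _ (Submodule.mem_sup_right (mem_normHomOn_of hAm))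
      (Submodule.mem_sup_left (mem_homOn_of hBm))


end
end

section
/- Let RS be the union of p concentric spheres of distinct positive radii about the origin in R^d. Then Pol'_j(RS) = ⊕_{i=0}^{p-1} Hom'_{j-i}(RS), a direct sum, and consequently dim Pol'_j(RS) = sum_{i=0}^{p-1} dim Hom'_{j-i}(R^d). -/
open MeasureTheory MvPolynomial
open scoped BigOperators RealInnerProductSpace Classical

noncomputable section

namespace PolAux
open Matrix

/-- evaluation of a polynomial, as a linear map into functions on `T`. -/
def evalL (d : ℕ) (T : Set (Euc d)) : MvPolynomial (Fin d) ℝ →ₗ[ℝ] (T → ℝ) where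
  toFun p := restrictFun T fun x => eval (fun i => x i) p
  map_add' p q := by funext x; simp [restrictFun]
  map_smul' c p := by funext x; simp [restrictFun, MvPolynomial.smul_eval]

def normEvalL (d : ℕ) (T : Set (Euc d)) : MvPolynomial (Fin d) ℝ →ₗ[ℝ] (T → ℝ) where
  toFun p := restrictFun T fun x => ‖x‖ * eval (fun i => x i) p
  map_add' p q := by funext x; simp [restrictFun]; ring
  map_smul' c p := by funext x; simp [restrictFun, MvPolynomial.smul_eval]; ring

variable {d : ℕ}

lemma HomOn_eq_map (j : ℕ) (T : Set (Euc d)) :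
    HomOn d j T = (MvPolynomial.homogeneousSubmodule (Fin d) ℝ j).map (evalL d T) := by
  rw [HomOn, ← Submodule.span_eq ((MvPolynomial.homogeneousSubmodule (Fin d) ℝ j).map (evalL d T))]
  congr 1
  ext f
  simp only [Submodule.map_coe, Set.mem_image, SetLike.mem_coe, mem_homogeneousSubmodule,
    Set.mem_setOf_eq]
  constructor
  · rintro ⟨p, hp, rfl⟩; exact ⟨p, hp, rfl⟩
  · rintro ⟨p, hp, rfl⟩; exact ⟨p, hp, rfl⟩

lemma NormHomOn_eq_map (j : ℕ) (T : Set (Euc d)) :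
    NormHomOn d j T = (MvPolynomial.homogeneousSubmodule (Fin d) ℝ j).map (normEvalL d T) := by
  rw [NormHomOn,
    ← Submodule.span_eq ((MvPolynomial.homogeneousSubmodule (Fin d) ℝ j).map (normEvalL d T))]
  congr 1
  ext f
  simp only [Submodule.map_coe, Set.mem_image, SetLike.mem_coe, mem_homogeneousSubmodule,
    Set.mem_setOf_eq]
  constructor
  · rintro ⟨p, hp, rfl⟩; exact ⟨p, hp, rfl⟩
  · rintro ⟨p, hp, rfl⟩; exact ⟨p, hp, rfl⟩

lemma mem_HomOn'_iff {k : ℕ} {T : Set (Euc d)} {f : T → ℝ} :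
    f ∈ HomOn' d k T ↔ ∃ p q : MvPolynomial (Fin d) ℝ,
      p.IsHomogeneous k ∧ q.IsHomogeneous (k - 1) ∧ f = evalL d T p + normEvalL d T q := by
  rw [HomOn', Submodule.mem_sup]
  constructor
  · rintro ⟨y, hy, z, hz, rfl⟩
    rw [HomOn_eq_map] at hy
    rw [NormHomOn_eq_map] at hz
    obtain ⟨p, hp, rfl⟩ := hy
    obtain ⟨q, hq, rfl⟩ := hz
    exact ⟨p, q, hp, hq, rfl⟩
  · rintro ⟨p, q, hp, hq, rfl⟩
    exact ⟨evalL d T p, (HomOn_eq_map k T).symm ▸ Submodule.mem_map_of_mem hp,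
      normEvalL d T q, (NormHomOn_eq_map (k-1) T).symm ▸ Submodule.mem_map_of_mem hq, rfl⟩

lemma eval_mul_scale {e : ℕ} {q : MvPolynomial (Fin d) ℝ} (hq : q.IsHomogeneous e)
    (c : ℝ) (x : Fin d → ℝ) :
    eval (fun i => c * x i) q = c ^ e * eval x q := by
  rw [MvPolynomial.eval_eq', MvPolynomial.eval_eq', Finset.mul_sum]
  refine Finset.sum_congr rfl fun m hm => ?_
  have h1 := hq (MvPolynomial.mem_support_iff.mp hm)
  have hdeg : ∑ i, m i = e := by
    rw [← h1, Finsupp.weight_apply]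
    simp only [smul_eq_mul, Pi.one_apply, mul_one]
    rw [Finsupp.sum]
    exact (Finset.sum_subset (Finset.subset_univ _)
      (fun i _ hnot => Finsupp.notMem_support_iff.mp hnot)).symm
  calc MvPolynomial.coeff m q * ∏ i, (c * x i) ^ m i
      = MvPolynomial.coeff m q * ((∏ i, c ^ m i) * ∏ i, x i ^ m i) := by
        rw [← Finset.prod_mul_distrib]; simp [mul_pow]
    _ = c ^ e * (MvPolynomial.coeff m q * ∏ i, x i ^ m i) := by
        rw [Finset.prod_pow_eq_pow_sum, hdeg]; ring

/-- the polynomial `∑ i, X i ^ 2`. -/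
def NS (d : ℕ) : MvPolynomial (Fin d) ℝ := ∑ i, X i ^ 2

lemma NS_homog : (NS d).IsHomogeneous 2 :=
  MvPolynomial.IsHomogeneous.sum _ _ _ fun i _ => by simpa using (MvPolynomial.isHomogeneous_X ℝ i).pow 2

lemma norm_sq_eq (x : Euc d) : ‖x‖ ^ 2 = ∑ i, x i ^ 2 := by
  rw [EuclideanSpace.norm_eq, Real.sq_sqrt]
  · refine Finset.sum_congr rfl fun i _ => by rw [Real.norm_eq_abs, sq_abs]
  · positivity

lemma eval_NS (x : Euc d) : eval (fun i => x i) (NS d) = ‖x‖ ^ 2 := by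
  rw [norm_sq_eq]
  simp [NS]

lemma eval_NS_pow_mul (s : ℕ) (q : MvPolynomial (Fin d) ℝ) (x : Euc d) :
    eval (fun i => x i) (NS d ^ s * q) = ‖x‖ ^ (2 * s) * eval (fun i => x i) q := by
  rw [_root_.map_mul, map_pow, eval_NS, ← pow_mul]

lemma NS_pow_mul_homog (s e : ℕ) {q : MvPolynomial (Fin d) ℝ} (hq : q.IsHomogeneous e) :
    (NS d ^ s * q).IsHomogeneous (2 * s + e) :=
  (NS_homog.pow s).mul hq



lemma vand_one (p : ℕ) (r : Fin p → ℝ) (h0 : ∀ i, r i ≠ 0) (hinj : Function.Injective r) :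
    ∃ a : Fin p → ℝ, ∀ ℓ, ∑ t, a t * r ℓ ^ ((t : ℕ) + 1) = 1 := by
  set B : Matrix (Fin p) (Fin p) ℝ := Matrix.of fun ℓ t => r ℓ ^ ((t : ℕ) + 1) with hBdef
  have hB : B = Matrix.diagonal r * Matrix.vandermonde r := by
    ext ℓ t
    simp [hBdef, Matrix.diagonal_mul, Matrix.vandermonde, pow_succ, mul_comm]
  have hdet : IsUnit B.det := by
    rw [hB, Matrix.det_mul, Matrix.det_diagonal]
    exact (isUnit_iff_ne_zero).mpr (mul_ne_zero (Finset.prod_ne_zero_iff.mpr fun i _ => h0 i)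
      (Matrix.det_vandermonde_ne_zero_iff.mpr hinj))
  refine ⟨B⁻¹.mulVec 1, fun ℓ => ?_⟩
  have h1 : B.mulVec (B⁻¹.mulVec 1) = 1 := by
    rw [Matrix.mulVec_mulVec, Matrix.mul_nonsing_inv _ hdet, Matrix.one_mulVec]
  have h2 := congrFun h1 ℓ
  rw [Matrix.mulVec, dotProduct] at h2
  simpa [hBdef, mul_comm] using h2

lemma vand_zero {p : ℕ} (r : Fin p → ℝ) (hinj : Function.Injective r) (v : Fin p → ℝ)
    (h : ∀ ℓ, ∑ i, v i * r ℓ ^ (i : ℕ) = 0) : ∀ i, v i = 0 := by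
  have hdet : IsUnit (Matrix.vandermonde r).det :=
    isUnit_iff_ne_zero.mpr (Matrix.det_vandermonde_ne_zero_iff.mpr hinj)
  have hv : (Matrix.vandermonde r).mulVec v = 0 := by
    funext ℓ
    rw [Matrix.mulVec, dotProduct]
    simpa [Matrix.vandermonde, mul_comm] using h ℓ
  have hv2 : v = 0 := by
    have h3 := congrArg (fun w => (Matrix.vandermonde r)⁻¹.mulVec w) hv
    simpa [Matrix.mulVec_mulVec, Matrix.nonsing_inv_mul _ hdet, Matrix.one_mulVec,
      Matrix.mulVec_zero] using h3
  exact fun i => congrFun hv2 i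

lemma vand_zero' {p j : ℕ} (hpj : p ≤ j) (r : Fin p → ℝ) (hpos : ∀ i, 0 < r i)
    (hinj : Function.Injective r) (w : Fin p → ℝ)
    (h : ∀ ℓ, ∑ i, w i * r ℓ ^ (j - (i : ℕ)) = 0) : ∀ i, w i = 0 := by
  have key : ∀ ℓ, ∑ i, (fun i => w (Fin.rev i)) i * r ℓ ^ (i : ℕ) = 0 := by
    intro ℓ
    have hr : (0 : ℝ) < r ℓ := hpos ℓ
    have e1 : ∑ i, w i * r ℓ ^ (j - (i : ℕ))
        = r ℓ ^ (j - p + 1) * ∑ i, w i * r ℓ ^ (p - 1 - (i : ℕ)) := by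
      rw [Finset.mul_sum]
      refine Finset.sum_congr rfl fun i _ => ?_
      have hi := i.isLt
      have : j - (i:ℕ) = (j - p + 1) + (p - 1 - (i:ℕ)) := by omega
      rw [this, pow_add]
      ring
    have e2 : ∑ i, w i * r ℓ ^ (p - 1 - (i : ℕ)) = 0 := by
      have := h ℓ
      rw [e1] at this
      exact (mul_eq_zero.mp this).resolve_left (pow_ne_zero _ hr.ne')
    rw [← e2]
    refine Fintype.sum_equiv Fin.revPerm _ _ fun i => ?_
    have hi := i.isLt
    have h1 : ((Fin.revPerm i : Fin p) : ℕ) = p - 1 - (i : ℕ) := by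
      show (Fin.rev i : ℕ) = _
      rw [Fin.val_rev]
      omega
    rw [h1]
    have h2 : p - 1 - (p - 1 - (i : ℕ)) = (i : ℕ) := by omega
    rw [h2]
    rfl
  have := vand_zero r hinj _ key
  intro i
  have h2 := this (Fin.rev i)
  rwa [Fin.rev_rev] at h2


section Main

variable {d p j : ℕ} {r : Fin p → ℝ} {T : Set (Euc d)}

/-- Key membership induction: `‖x‖^m * q(x)` restricted to `T` lies in the sum of the
`Hom'` spaces. -/
lemma key_mem (hpj : p ≤ j) (hpos : ∀ i, 0 < r i) (hinj : Function.Injective r)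
    (hT : ∀ y : Euc d, y ∈ T ↔ ∃ ℓ : Fin p, ‖y‖ = r ℓ) :
    ∀ n m e (q : MvPolynomial (Fin d) ℝ), q.IsHomogeneous e → e + m ≤ j →
      2 * (j - e - m) + m % 2 ≤ n →
      (restrictFun T fun x => ‖x‖ ^ m * eval (fun i => x i) q) ∈
        ⨆ i : Fin p, HomOn' d (j - (i : ℕ)) T := by
  intro n
  induction n using Nat.strong_induction_on with
  | _ n IH =>
  intro m e q hq hle hmeas
  rcases Nat.eq_zero_or_pos p with hp | hp
  · subst hp
    have hempty : ∀ x : T, False := fun x => by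
      obtain ⟨ℓ, -⟩ := (hT x).mp x.2
      exact ℓ.elim0
    have h0 : (restrictFun T fun x => ‖x‖ ^ m * eval (fun i => x i) q) = 0 :=
      funext fun x => absurd trivial (fun _ => hempty x)
    rw [h0]; exact zero_mem _
  by_cases hbase : j < e + m + p
  · -- base case
    have hi : j - (e + m) < p := by omega
    have hji : j - ((⟨j - (e + m), hi⟩ : Fin p) : ℕ) = e + m := by
      show j - (j - (e + m)) = e + m
      omega
    refine le_iSup (fun i : Fin p => HomOn' d (j - (i : ℕ)) T) ⟨j - (e + m), hi⟩ ?_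
    show (restrictFun T fun x => ‖x‖ ^ m * eval (fun i => x i) q) ∈
      HomOn' d (j - ((⟨j - (e + m), hi⟩ : Fin p) : ℕ)) T
    rw [hji]
    rcases Nat.even_or_odd m with ⟨s, hs⟩ | ⟨s, hs⟩
    · have hfun : (restrictFun T fun x => ‖x‖ ^ m * eval (fun i => x i) q)
          = evalL d T (NS d ^ s * q) := by
        funext x
        show ‖(x : Euc d)‖ ^ m * _ = _
        rw [show (evalL d T (NS d ^ s * q)) x = eval (fun i => (x : Euc d) i) (NS d ^ s * q) from
          rfl, eval_NS_pow_mul]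
        congr 2
        omega
      rw [hfun]
      apply Submodule.mem_sup_left
      rw [HomOn_eq_map]
      refine Submodule.mem_map_of_mem ?_
      have := NS_pow_mul_homog s e hq
      rw [mem_homogeneousSubmodule]
      convert this using 1
      omega
    · have hfun : (restrictFun T fun x => ‖x‖ ^ m * eval (fun i => x i) q)
          = normEvalL d T (NS d ^ s * q) := by
        funext x
        show ‖(x : Euc d)‖ ^ m * _ = _
        rw [show (normEvalL d T (NS d ^ s * q)) x
            = ‖(x : Euc d)‖ * eval (fun i => (x : Euc d) i) (NS d ^ s * q) from rfl,
          eval_NS_pow_mul]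
        rw [show m = 2 * s + 1 by omega]
        ring
      rw [hfun]
      apply Submodule.mem_sup_right
      rw [NormHomOn_eq_map]
      refine Submodule.mem_map_of_mem ?_
      have := NS_pow_mul_homog s e hq
      rw [mem_homogeneousSubmodule]
      convert this using 1
      omega
  · -- inductive step
    push_neg at hbase
    obtain ⟨a, ha⟩ := vand_one p r (fun i => (hpos i).ne') hinj
    have hfun : (restrictFun T fun x => ‖x‖ ^ m * eval (fun i => x i) q)
        = ∑ t : Fin p, a t •
            (restrictFun T fun x => ‖x‖ ^ (m + (t : ℕ) + 1) * eval (fun i => x i) q) := by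
      funext x
      obtain ⟨ℓ, hℓ⟩ := (hT x).mp x.2
      show ‖(x : Euc d)‖ ^ m * _ = _
      rw [show (∑ t : Fin p, a t • (restrictFun T fun x =>
          ‖x‖ ^ (m + (t : ℕ) + 1) * eval (fun i => x i) q)) x
          = ∑ t : Fin p, a t * (‖(x : Euc d)‖ ^ (m + (t : ℕ) + 1)
              * eval (fun i => (x : Euc d) i) q) by
        rw [Finset.sum_apply]; rfl]
      calc ‖(x : Euc d)‖ ^ m * eval (fun i => (x : Euc d) i) q
          = (∑ t : Fin p, a t * r ℓ ^ ((t : ℕ) + 1))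
            * (‖(x : Euc d)‖ ^ m * eval (fun i => (x : Euc d) i) q) := by
            rw [ha ℓ, one_mul]
        _ = _ := by
            rw [Finset.sum_mul]
            refine Finset.sum_congr rfl fun t _ => ?_
            rw [show m + (t : ℕ) + 1 = m + ((t : ℕ) + 1) by omega, pow_add, hℓ]
            ring
    rw [hfun]
    refine Submodule.sum_mem _ fun t _ => Submodule.smul_mem _ _ ?_
    have ht := t.isLt
    exact IH (2 * (j - e - (m + (t : ℕ) + 1)) + (m + (t : ℕ) + 1) % 2) (by omega)
      (m + (t : ℕ) + 1) e q hq (by omega) le_rfl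

lemma Pol_le (hpj : p ≤ j) (hpos : ∀ i, 0 < r i) (hinj : Function.Injective r)
    (hT : ∀ y : Euc d, y ∈ T ↔ ∃ ℓ : Fin p, ‖y‖ = r ℓ) :
    PolOn' d j T ≤ ⨆ i : Fin p, HomOn' d (j - (i : ℕ)) T := by
  rw [PolOn']
  apply Submodule.span_le.mpr
  rintro f ⟨F, ⟨f₀, g₀, hf₀, hg₀, rfl⟩, rfl⟩
  have main : ∀ (m : ℕ) (h : MvPolynomial (Fin d) ℝ),
      (h = 0 ∨ (h.totalDegree : ℤ) ≤ (j : ℤ) - m) → m ≤ 1 →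
      (restrictFun T fun x => ‖x‖ ^ m * eval (fun i => x i) h) ∈
        ⨆ i : Fin p, HomOn' d (j - (i : ℕ)) T := by
    intro m h hh hm
    rcases hh with rfl | hdeg
    · have h0 : (restrictFun T fun x => ‖x‖ ^ m * eval (fun i => x i) (0 : MvPolynomial (Fin d) ℝ))
          = 0 := by funext x; show ‖(x : Euc d)‖ ^ m * _ = _; simp
      rw [h0]; exact zero_mem _
    · have hdeg' : h.totalDegree + m ≤ j := by omega
      have hsplit : (restrictFun T fun x => ‖x‖ ^ m * eval (fun i => x i) h)
          = ∑ e ∈ Finset.range (h.totalDegree + 1),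
              (restrictFun T fun x => ‖x‖ ^ m
                * eval (fun i => x i) (MvPolynomial.homogeneousComponent e h)) := by
        funext x
        show ‖(x : Euc d)‖ ^ m * _ = _
        rw [show (∑ e ∈ Finset.range (h.totalDegree + 1), (restrictFun T fun x => ‖x‖ ^ m
            * eval (fun i => x i) (MvPolynomial.homogeneousComponent e h))) x
            = ∑ e ∈ Finset.range (h.totalDegree + 1), ‖(x : Euc d)‖ ^ m
              * eval (fun i => (x : Euc d) i) (MvPolynomial.homogeneousComponent e h) by
          rw [Finset.sum_apply]; rfl]
        rw [← Finset.mul_sum, ← map_sum, MvPolynomial.sum_homogeneousComponent]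
      rw [hsplit]
      refine Submodule.sum_mem _ fun e he => ?_
      rw [Finset.mem_range] at he
      exact key_mem hpj hpos hinj hT (2 * (j - e - m) + m % 2) m e _
        (MvPolynomial.homogeneousComponent_isHomogeneous e h) (by omega) le_rfl
  have hsum : restrictFun T (fun x => eval (fun i => x i) f₀ + ‖x‖ * eval (fun i => x i) g₀)
      = (restrictFun T fun x => ‖x‖ ^ 0 * eval (fun i => x i) f₀)
        + (restrictFun T fun x => ‖x‖ ^ 1 * eval (fun i => x i) g₀) := by
    funext x
    show _ + _ = ‖(x : Euc d)‖ ^ 0 * _ + ‖(x : Euc d)‖ ^ 1 * _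
    ring
  rw [SetLike.mem_coe, hsum]
  refine Submodule.add_mem _ (main 0 f₀ ?_ (by omega)) (main 1 g₀ ?_ le_rfl)
  · rcases hf₀ with h | h
    · exact Or.inl h
    · right; push_cast; omega
  · rcases hg₀ with h | h
    · exact Or.inl h
    · right; push_cast at h ⊢; omega

lemma le_Pol (hpj : p ≤ j) :
    (⨆ i : Fin p, HomOn' d (j - (i : ℕ)) T) ≤ PolOn' d j T := by
  apply iSup_le
  intro i
  have hi := i.isLt
  have hij : 1 ≤ j - (i : ℕ) := by omega
  apply sup_le
  · rw [HomOn]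
    apply Submodule.span_le.mpr
    rintro f ⟨q, hq, rfl⟩
    apply Submodule.subset_span
    refine ⟨fun x => eval (fun i => x i) q + ‖x‖ * eval (fun i => x i) (0 : MvPolynomial (Fin d) ℝ),
      ⟨q, 0, ?_, Or.inl rfl, rfl⟩, ?_⟩
    · by_cases hq0 : q = 0
      · exact Or.inl hq0
      · right
        rw [hq.totalDegree hq0]
        exact_mod_cast Nat.sub_le j (i : ℕ)
    · funext x
      show _ = _ + ‖(x : Euc d)‖ * _
      simp [restrictFun]
  · rw [NormHomOn]
    apply Submodule.span_le.mpr
    rintro f ⟨q, hq, rfl⟩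
    apply Submodule.subset_span
    refine ⟨fun x => eval (fun i => x i) (0 : MvPolynomial (Fin d) ℝ) + ‖x‖ * eval (fun i => x i) q,
      ⟨0, q, Or.inl rfl, ?_, rfl⟩, ?_⟩
    · by_cases hq0 : q = 0
      · exact Or.inl hq0
      · right
        rw [hq.totalDegree hq0]
        omega
    · funext x
      show _ = _ + ‖(x : Euc d)‖ * _
      simp [restrictFun]

lemma eval_smul_coord {e : ℕ} {q : MvPolynomial (Fin d) ℝ} (hq : q.IsHomogeneous e)
    (c : ℝ) (u : Euc d) :
    eval (fun i => (c • u) i) q = c ^ e * eval (fun i => u i) q := by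
  have hcoord : (fun i => (c • u) i) = fun i => c * u i := rfl
  rw [hcoord]
  exact eval_mul_scale hq c _

lemma indep_core (hpj : p ≤ j) (hpos : ∀ i, 0 < r i) (hinj : Function.Injective r)
    (hT : ∀ y : Euc d, y ∈ T ↔ ∃ ℓ : Fin p, ‖y‖ = r ℓ)
    (h g : Fin p → MvPolynomial (Fin d) ℝ)
    (hh : ∀ i, (h i).IsHomogeneous (j - (i : ℕ)))
    (hg : ∀ i, (g i).IsHomogeneous (j - (i : ℕ) - 1))
    (hsum : ∀ y : Euc d, y ∈ T →
      (∑ i, (eval (fun k => y k) (h i) + ‖y‖ * eval (fun k => y k) (g i))) = 0) :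
    ∀ i, ∀ y : Euc d, y ∈ T →
      eval (fun k => y k) (h i) + ‖y‖ * eval (fun k => y k) (g i) = 0 := by
  intro i y hy
  obtain ⟨ℓ, hℓ⟩ := (hT y).mp hy
  have hrℓ : 0 < r ℓ := hpos ℓ
  have hny : ‖y‖ ≠ 0 := by rw [hℓ]; exact hrℓ.ne'
  obtain ⟨u, hu⟩ : ∃ u : Euc d, u = ‖y‖⁻¹ • y := ⟨_, rfl⟩
  have hnu : ‖u‖ = 1 := by
    rw [hu, norm_smul, norm_inv, norm_norm, inv_mul_cancel₀ hny]
  have main : ∀ m : Fin p,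
      (∑ i : Fin p, (eval (fun k => u k) (h i) + eval (fun k => u k) (g i))
        * r m ^ (j - (i : ℕ))) = 0 ∧
      (∑ i : Fin p, ((-1 : ℝ) ^ (j - (i : ℕ))
          * (eval (fun k => u k) (h i) - eval (fun k => u k) (g i)))
        * r m ^ (j - (i : ℕ))) = 0 := by
    intro m
    have hrm := hpos m
    constructor
    · have hmem : (r m • u) ∈ T := (hT _).mpr ⟨m, by
        rw [norm_smul, hnu, mul_one, Real.norm_eq_abs, abs_of_pos hrm]⟩
      have h1 := hsum (r m • u) hmem
      refine Eq.trans (Finset.sum_congr rfl fun i _ => ?_) h1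
      have hi := i.isLt
      rw [eval_smul_coord (hh i), eval_smul_coord (hg i),
        norm_smul, hnu, mul_one, Real.norm_eq_abs, abs_of_pos hrm]
      obtain ⟨nn, hnn⟩ : ∃ nn, j - (i : ℕ) = nn + 1 := ⟨j - (i : ℕ) - 1, by omega⟩
      rw [show j - (i : ℕ) - 1 = nn by omega, hnn]
      ring
    · have hmem : ((-(r m)) • u) ∈ T := (hT _).mpr ⟨m, by
        rw [norm_smul, hnu, mul_one, Real.norm_eq_abs, abs_neg, abs_of_pos hrm]⟩
      have h1 := hsum ((-(r m)) • u) hmem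
      refine Eq.trans (Finset.sum_congr rfl fun i _ => ?_) h1
      have hi := i.isLt
      rw [eval_smul_coord (hh i), eval_smul_coord (hg i),
        norm_smul, hnu, mul_one, Real.norm_eq_abs, abs_neg, abs_of_pos hrm]
      obtain ⟨nn, hnn⟩ : ∃ nn, j - (i : ℕ) = nn + 1 := ⟨j - (i : ℕ) - 1, by omega⟩
      rw [show j - (i : ℕ) - 1 = nn by omega, hnn]
      rw [neg_pow, neg_pow]
      ring
  have z1 : ∀ i : Fin p,
      eval (fun k => u k) (h i) + eval (fun k => u k) (g i) = 0 :=
    vand_zero' hpj r hpos hinj _ fun m => (main m).1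
  have z2 : ∀ i : Fin p, (-1 : ℝ) ^ (j - (i : ℕ))
      * (eval (fun k => u k) (h i) - eval (fun k => u k) (g i)) = 0 :=
    vand_zero' hpj r hpos hinj _ fun m => (main m).2
  have e2 : eval (fun k => u k) (h i) - eval (fun k => u k) (g i) = 0 := by
    rcases mul_eq_zero.mp (z2 i) with hcon | hok
    · exact absurd hcon (pow_ne_zero _ (by norm_num))
    · exact hok
  have hA0 : eval (fun k => u k) (h i) = 0 := by have := z1 i; linarith
  have hB0 : eval (fun k => u k) (g i) = 0 := by have := z1 i; linarith
  have hyu : y = ‖y‖ • u := by rw [hu, smul_inv_smul₀ hny]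
  have e3 : eval (fun k => y k) (h i) = ‖y‖ ^ (j - (i : ℕ)) * eval (fun k => u k) (h i) := by
    conv_lhs => rw [hyu]
    exact eval_smul_coord (hh i) _ _
  have e4 : eval (fun k => y k) (g i)
      = ‖y‖ ^ (j - (i : ℕ) - 1) * eval (fun k => u k) (g i) := by
    conv_lhs => rw [hyu]
    exact eval_smul_coord (hg i) _ _
  rw [e3, e4, hA0, hB0]
  ring

lemma indep (hpj : p ≤ j) (hpos : ∀ i, 0 < r i) (hinj : Function.Injective r)
    (hT : ∀ y : Euc d, y ∈ T ↔ ∃ ℓ : Fin p, ‖y‖ = r ℓ) :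
    iSupIndep (fun i : Fin p => HomOn' d (j - (i : ℕ)) T) := by
  rw [iSupIndep_def]
  intro i
  rw [Submodule.disjoint_def]
  intro f hfi hfr
  rw [iSup_subtype'] at hfr
  rw [Submodule.mem_iSup_iff_exists_finsupp] at hfr
  obtain ⟨χ, hχ, hχsum⟩ := hfr
  classical
  set F : Fin p → (T → ℝ) := fun m => if hm : m = i then -f else χ ⟨m, hm⟩ with hF
  have hFmem : ∀ m : Fin p, F m ∈ HomOn' d (j - (m : ℕ)) T := by
    intro m
    by_cases hm : m = i
    · subst hm; simp only [hF, dif_pos]; exact neg_mem hfi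
    · simp only [hF, dif_neg hm]; exact hχ ⟨m, hm⟩
  have h1 : F i = -f := by simp [hF]
  have hFsum : ∑ m, F m = 0 := by
    rw [← Finset.add_sum_erase _ _ (Finset.mem_univ i)]
    have h2 : ∑ m ∈ Finset.univ.erase i, F m = f := by
      rw [Finset.sum_subtype (Finset.univ.erase i) (p := fun m => m ≠ i)
        (fun x => by simp [Finset.mem_erase]) F]
      have h3 : ∀ a : {m : Fin p // m ≠ i}, F a.val = χ a := by
        rintro ⟨a, ha⟩
        simp only [hF, dif_neg ha]
      rw [Finset.sum_congr rfl fun a _ => h3 a]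
      rw [← hχsum, Finsupp.sum_fintype _ _ fun _ => rfl]
    rw [h1, h2, neg_add_cancel]
  have hex := fun m => mem_HomOn'_iff.mp (hFmem m)
  choose hp gp hhp hgp hFeq using hex
  have hz : ∀ m : Fin p, ∀ y : Euc d, y ∈ T →
      eval (fun k => y k) (hp m) + ‖y‖ * eval (fun k => y k) (gp m) = 0 := by
    refine indep_core hpj hpos hinj hT hp gp hhp hgp ?_
    intro y hy
    have h4 := congrFun hFsum ⟨y, hy⟩
    rw [Finset.sum_apply] at h4
    have h4' : ∑ c : Fin p, F c ⟨y, hy⟩ = 0 := by simpa using h4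
    refine Eq.trans (Finset.sum_congr rfl fun m _ => ?_) h4'
    rw [hFeq m]
    rfl
  have hFi : F i = 0 := by
    funext x
    have := hz i x.1 x.2
    rw [hFeq i]
    exact this
  rw [h1] at hFi
  exact neg_eq_zero.mp hFi

/-- restriction (from functions on `univ` to functions on `T`) as a linear map -/
def resL (d : ℕ) (T : Set (Euc d)) :
    (↥(Set.univ : Set (Euc d)) → ℝ) →ₗ[ℝ] (↥T → ℝ) :=
  LinearMap.funLeft ℝ ℝ fun x : T => (⟨x.1, Set.mem_univ _⟩ : ↥(Set.univ : Set (Euc d)))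

lemma resL_map_HomOn' (k : ℕ) :
    (HomOn' d k (Set.univ : Set (Euc d))).map (resL d T) = HomOn' d k T := by
  have hcomp1 : (evalL d T) = (resL d T).comp (evalL d (Set.univ : Set (Euc d))) :=
    LinearMap.ext fun q => rfl
  have hcomp2 : (normEvalL d T) = (resL d T).comp (normEvalL d (Set.univ : Set (Euc d))) :=
    LinearMap.ext fun q => rfl
  rw [HomOn', HomOn', Submodule.map_sup, HomOn_eq_map, HomOn_eq_map, NormHomOn_eq_map,
    NormHomOn_eq_map, hcomp1, hcomp2, Submodule.map_comp, Submodule.map_comp]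

lemma resL_inj_on_HomOn' (hp : 0 < p) (hpos : ∀ i, 0 < r i)
    (hT : ∀ y : Euc d, y ∈ T ↔ ∃ ℓ : Fin p, ‖y‖ = r ℓ) {k : ℕ} (hk : 1 ≤ k) :
    ∀ f ∈ HomOn' d k (Set.univ : Set (Euc d)), resL d T f = 0 → f = 0 := by
  intro f hf hres
  obtain ⟨h, g, hh, hg, rfl⟩ := mem_HomOn'_iff.mp hf
  have hz : ∀ y : Euc d, y ∈ T →
      eval (fun k => y k) h + ‖y‖ * eval (fun k => y k) g = 0 := by
    intro y hy
    exact congrFun hres ⟨y, hy⟩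
  have key : ∀ x : Euc d, eval (fun k => x k) h + ‖x‖ * eval (fun k => x k) g = 0 := by
    intro x
    by_cases hx : x = 0
    · subst hx
      have hc : (fun k => (0 : Euc d) k) = fun k : Fin d => (0 : ℝ) * (0 : Euc d) k := by
        funext k; simp
      rw [hc, eval_mul_scale hh, norm_zero, zero_pow (by omega : k ≠ 0)]
      simp
    · have hnx : ‖x‖ ≠ 0 := norm_ne_zero_iff.mpr hx
      obtain ⟨u, hu⟩ : ∃ u : Euc d, u = ‖x‖⁻¹ • x := ⟨_, rfl⟩
      have hnu : ‖u‖ = 1 := by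
        rw [hu, norm_smul, norm_inv, norm_norm, inv_mul_cancel₀ hnx]
      obtain ⟨R, hR⟩ : ∃ R : ℝ, R = r ⟨0, hp⟩ := ⟨_, rfl⟩
      have hRpos : 0 < R := hR ▸ hpos _
      obtain ⟨A, hA⟩ : ∃ A : ℝ, A = eval (fun k => u k) h := ⟨_, rfl⟩
      obtain ⟨B, hB⟩ : ∃ B : ℝ, B = eval (fun k => u k) g := ⟨_, rfl⟩
      have hmem1 : (R • u) ∈ T := (hT _).mpr ⟨⟨0, hp⟩, by
        rw [norm_smul, hnu, mul_one, Real.norm_eq_abs, abs_of_pos hRpos, hR]⟩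
      have hmem2 : ((-R) • u) ∈ T := (hT _).mpr ⟨⟨0, hp⟩, by
        rw [norm_smul, hnu, mul_one, Real.norm_eq_abs, abs_neg, abs_of_pos hRpos, hR]⟩
      have e1 := hz _ hmem1
      have e2 := hz _ hmem2
      rw [eval_smul_coord hh, eval_smul_coord hg, norm_smul, hnu, mul_one, Real.norm_eq_abs,
        abs_of_pos hRpos, ← hA, ← hB] at e1
      rw [eval_smul_coord hh, eval_smul_coord hg, norm_smul, hnu, mul_one, Real.norm_eq_abs,
        abs_neg, abs_of_pos hRpos, ← hA, ← hB] at e2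
      obtain ⟨nn, hnn⟩ : ∃ nn, k = nn + 1 := ⟨k - 1, by omega⟩
      rw [show k - 1 = nn by omega, hnn] at e1 e2
      rw [show ((-R) : ℝ) = (-1) * R by ring, mul_pow, mul_pow] at e2
      rw [pow_succ] at e1
      rw [pow_succ, pow_succ] at e2
      have e1' : R ^ nn * R * (A + B) = 0 := by linear_combination e1
      have e2' : ((-1 : ℝ) ^ nn) * (R ^ nn * R) * (A - B) = 0 := by linear_combination -e2
      have hRk : R ^ nn * R ≠ 0 := mul_ne_zero (pow_ne_zero _ hRpos.ne') hRpos.ne'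
      have hAB1 : A + B = 0 := by
        rcases mul_eq_zero.mp e1' with hcon | hok
        · exact absurd hcon hRk
        · exact hok
      have hAB2 : A - B = 0 := by
        rcases mul_eq_zero.mp e2' with hcon | hok
        · rcases mul_eq_zero.mp hcon with hcon2 | hcon3
          · exact absurd hcon2 (pow_ne_zero _ (by norm_num))
          · exact absurd hcon3 hRk
        · exact hok
      have hA0 : A = 0 := by linarith
      have hB0 : B = 0 := by linarith
      have hxu : x = ‖x‖ • u := by rw [hu, smul_inv_smul₀ hnx]
      have e3 : eval (fun k => x k) h = ‖x‖ ^ k * A := by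
        conv_lhs => rw [hxu]
        rw [hA]
        exact eval_smul_coord hh _ _
      have e4 : eval (fun k => x k) g = ‖x‖ ^ (k - 1) * B := by
        conv_lhs => rw [hxu]
        rw [hB]
        exact eval_smul_coord hg _ _
      rw [e3, e4, hA0, hB0]
      ring
  funext x
  exact key x.1

lemma fd_homSub (d k : ℕ) : FiniteDimensional ℝ (MvPolynomial.homogeneousSubmodule (Fin d) ℝ k) :=
  Submodule.finiteDimensional_of_le
    (S₂ := MvPolynomial.restrictTotalDegree (Fin d) ℝ k)
    (fun x hx => by
      rw [MvPolynomial.mem_restrictTotalDegree]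
      exact MvPolynomial.IsHomogeneous.totalDegree_le hx)

instance fd_HomOn (k : ℕ) (T : Set (Euc d)) : FiniteDimensional ℝ (HomOn d k T) := by
  haveI := fd_homSub d k
  rw [HomOn_eq_map, ← LinearMap.range_domRestrict]
  infer_instance

instance fd_NormHomOn (k : ℕ) (T : Set (Euc d)) : FiniteDimensional ℝ (NormHomOn d k T) := by
  haveI := fd_homSub d k
  rw [NormHomOn_eq_map, ← LinearMap.range_domRestrict]
  infer_instance

instance fd_HomOn' (k : ℕ) (T : Set (Euc d)) : FiniteDimensional ℝ (HomOn' d k T) := by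
  rw [HomOn']
  infer_instance

lemma finrank_HomOn'_eq (hp : 0 < p) (hpos : ∀ i, 0 < r i)
    (hT : ∀ y : Euc d, y ∈ T ↔ ∃ ℓ : Fin p, ‖y‖ = r ℓ) {k : ℕ} (hk : 1 ≤ k) :
    Module.finrank ℝ (HomOn' d k T)
      = Module.finrank ℝ (HomOn' d k (Set.univ : Set (Euc d))) := by
  set W := HomOn' d k (Set.univ : Set (Euc d)) with hW
  have hinj2 : Function.Injective ((resL d T).domRestrict W) := by
    rw [← LinearMap.ker_eq_bot]
    rw [Submodule.eq_bot_iff]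
    rintro ⟨f, hf⟩ hker
    have : resL d T f = 0 := hker
    exact Subtype.ext (resL_inj_on_HomOn' hp hpos hT hk f hf this)
  have h5 := LinearMap.finrank_range_of_inj hinj2
  rw [LinearMap.range_domRestrict] at h5
  rw [← resL_map_HomOn' (T := T) k, ← hW, h5]

lemma finrank_iSup_eq_sum {M : Type*} [AddCommGroup M] [Module ℝ M] {ι : Type*} [Fintype ι]
    (V : ι → Submodule ℝ M) (hV : iSupIndep V) [∀ i, FiniteDimensional ℝ (V i)] :
    Module.finrank ℝ (⨆ i, V i : Submodule ℝ M) = ∑ i, Module.finrank ℝ (V i) := by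
  classical
  have H : ∀ s : Finset ι,
      Module.finrank ℝ (⨆ i ∈ s, V i : Submodule ℝ M) = ∑ i ∈ s, Module.finrank ℝ (V i) := by
    intro s
    induction s using Finset.induction with
    | empty => simp [finrank_bot]
    | @insert a s ha ih =>
      rw [Finset.iSup_insert, Finset.sum_insert ha]
      have hd : Disjoint (V a) (⨆ i ∈ s, V i : Submodule ℝ M) := by
        refine (hV a).mono_right ?_
        refine iSup_le fun i => iSup_le fun hi => ?_
        exact le_iSup₂ (f := fun (i : ι) (_ : i ≠ a) => V i) i (fun hia => ha (hia ▸ hi))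
      haveI hfd : FiniteDimensional ℝ (⨆ i ∈ s, V i : Submodule ℝ M) := by
        rw [iSup_subtype']
        infer_instance
      have h6 := Submodule.finrank_sup_add_finrank_inf_eq (V a) (⨆ i ∈ s, V i : Submodule ℝ M)
      rw [hd.eq_bot, finrank_bot, add_zero] at h6
      rw [h6, ih]
  have h7 := H Finset.univ
  have h8 : (⨆ i ∈ Finset.univ, V i : Submodule ℝ M) = ⨆ i, V i := by
    apply le_antisymm
    · exact iSup_le fun i => iSup_le fun _ => le_iSup V i
    · exact iSup_le fun i => le_iSup₂ (f := fun i (_ : i ∈ Finset.univ) => V i) i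
        (Finset.mem_univ i)
  rw [← h8]
  rw [h7]

end Main
end PolAux


/-- For `RS` a union of `p` concentric spheres of distinct positive radii,
`Pol'_j(RS) = ⊕_{i=0}^{p-1} Hom'_{j-i}(RS)` (a direct sum), and consequently
`dim Pol'_j(RS) = ∑_{i=0}^{p-1} dim Hom'_{j-i}(ℝ^d)`. -/
theorem polOn'_decomposition (d p j : ℕ) (hpj : p ≤ j) (r : Fin p → ℝ)
    (hrpos : ∀ i, 0 < r i) (hrinj : Function.Injective r) :
    (PolOn' d j (⋃ i, Metric.sphere (0 : Euc d) (r i)) =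
        ⨆ i : Fin p, HomOn' d (j - (i : ℕ)) (⋃ i, Metric.sphere (0 : Euc d) (r i))) ∧
      iSupIndep
        (fun i : Fin p => HomOn' d (j - (i : ℕ)) (⋃ i, Metric.sphere (0 : Euc d) (r i))) ∧
      Module.finrank ℝ (PolOn' d j (⋃ i, Metric.sphere (0 : Euc d) (r i))) =
        ∑ i : Fin p, Module.finrank ℝ (HomOn' d (j - (i : ℕ)) (Set.univ : Set (Euc d))) := by
  have hT : ∀ y : Euc d, y ∈ (⋃ i, Metric.sphere (0 : Euc d) (r i)) ↔ ∃ ℓ : Fin p, ‖y‖ = r ℓ := by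
    intro y
    simp [Set.mem_iUnion, Metric.mem_sphere, dist_zero_right]
  rcases Nat.eq_zero_or_pos p with hp0 | hp
  · subst hp0
    haveI hEmpty : IsEmpty ↥(⋃ i : Fin 0, Metric.sphere (0 : Euc d) (r i)) := by
      refine ⟨fun x => ?_⟩
      obtain ⟨ℓ, -⟩ := (hT x.1).mp x.2
      exact ℓ.elim0
    haveI hsub : Subsingleton (↥(⋃ i : Fin 0, Metric.sphere (0 : Euc d) (r i)) → ℝ) :=
      ⟨fun a b => funext fun x => (hEmpty.false x).elim⟩
    refine ⟨?_, ?_, ?_⟩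
    · apply le_antisymm
      · intro x _
        rw [Subsingleton.elim x 0]
        exact zero_mem _
      · intro x _
        rw [Subsingleton.elim x 0]
        exact zero_mem _
    · exact fun i => i.elim0
    · haveI : Subsingleton ↥(PolOn' d j (⋃ i : Fin 0, Metric.sphere (0 : Euc d) (r i))) :=
        ⟨fun a b => Subtype.ext (Subsingleton.elim _ _)⟩
      rw [Module.finrank_zero_of_subsingleton]
      simp
  · have hclaim1 : PolOn' d j (⋃ i, Metric.sphere (0 : Euc d) (r i))
        = ⨆ i : Fin p, HomOn' d (j - (i : ℕ)) (⋃ i, Metric.sphere (0 : Euc d) (r i)) :=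
      le_antisymm (PolAux.Pol_le hpj hrpos hrinj hT) (PolAux.le_Pol hpj)
    have hclaim2 := PolAux.indep hpj hrpos hrinj hT
    refine ⟨hclaim1, hclaim2, ?_⟩
    rw [hclaim1]
    rw [PolAux.finrank_iSup_eq_sum _ hclaim2]
    refine Finset.sum_congr rfl fun i _ => ?_
    have hk : 1 ≤ j - (i : ℕ) := by have := i.isLt; omega
    exact PolAux.finrank_HomOn'_eq hp hrpos hT hk

end
end
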